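/- arXiv:1105.2881 — 3 statements merged into one kernel-verified Lean document; each statement's English description precedes it below -/
import Mathlib

section
/- Let (Φ_t)_{t≥0} be a continuous one-parameter semigroup on the right half-plane Π with Denjoy–Wolff point at ∞, generated by −φ, where φ admits the representation φ(w) = β + γ/(w+1) + ϱ₁(w) with β, γ ∈ ℂ, β ≠ 0, and w·ϱ₁(w) → 0 as |w| → ∞, w ∈ Π. Then for every w ∈ Π, lim_{t→∞} ( Φ_t(w) − βt − (γ/β)·log(t+1) ) / log(t+1) = 0; that is, Φ_t(w) = βt + (γ/β)log(t+1) + Γ₁(w,t) with Γ₁(w,t)/log(t+1) → 0 as t → ∞. -/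
open Complex Filter Topology Set MeasureTheory

noncomputable section

/-- The right half-plane in the complex plane. -/
def rightHalfPlane : Set ℂ := {w : ℂ | 0 < w.re}

/-- A continuous one-parameter semigroup `Φ` on the right half-plane generated by `-φ`,
where `Re φ ≥ 0`: each `Φ t` is a holomorphic self-map of the half-plane, `Φ 0 = id`,
`Φ (t+s) = Φ t ∘ Φ s`, and for each `w` the trajectory `t ↦ Φ t w` solves
`∂Φ_t(w)/∂t = φ(Φ_t(w))`. -/
structure IsContinuousSemigroupOnHalfPlane (Φ : ℝ → ℂ → ℂ) (φ : ℂ → ℂ) : Prop where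
  mapsTo : ∀ t : ℝ, 0 ≤ t → Set.MapsTo (Φ t) rightHalfPlane rightHalfPlane
  holomorphic : ∀ t : ℝ, 0 ≤ t → DifferentiableOn ℂ (Φ t) rightHalfPlane
  init : ∀ w ∈ rightHalfPlane, Φ 0 w = w
  semigroup : ∀ t s : ℝ, 0 ≤ t → 0 ≤ s → ∀ w ∈ rightHalfPlane, Φ (t + s) w = Φ t (Φ s w)
  gen_holomorphic : DifferentiableOn ℂ φ rightHalfPlane
  gen_re_nonneg : ∀ w ∈ rightHalfPlane, 0 ≤ (φ w).re
  ode : ∀ w ∈ rightHalfPlane, ∀ t : ℝ, 0 ≤ t →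
    HasDerivWithinAt (fun s : ℝ => Φ s w) (φ (Φ t w)) (Set.Ici (0 : ℝ)) t

/-- The semigroup has Denjoy–Wolff point at `∞`. -/
def HasDWPointInfty (Φ : ℝ → ℂ → ℂ) : Prop :=
  ∀ w ∈ rightHalfPlane, Tendsto (fun t : ℝ => ‖Φ t w‖) atTop atTop

/-- The filter of neighbourhoods of `∞` within a set `S ⊆ ℂ`:
`|w| → ∞` with `w ∈ S`. -/
def atInftyWithin (S : Set ℂ) : Filter ℂ :=
  Filter.comap (fun z : ℂ => ‖z‖) Filter.atTop ⊓ Filter.principal S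

/-- `σ` solves `σ' = 1/φ` on the right half-plane with `σ 1 = 0`. -/
def IsSigmaFunction (φ σ : ℂ → ℂ) : Prop :=
  (∀ w ∈ rightHalfPlane, HasDerivAt σ (1 / φ w) w) ∧ σ 1 = 0

lemma cesaro (f : ℝ → ℂ) (k : ℝ → ℝ)
    (hf : ContinuousOn f (Ici 0)) (hk : ContinuousOn k (Ici 0))
    (hknn : ∀ s, 0 ≤ s → 0 ≤ k s)
    (hK : Tendsto (fun t => ∫ s in (0:ℝ)..t, k s) atTop atTop)
    (h0 : Tendsto f atTop (𝓝 0)) :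
    Tendsto (fun t => (∫ s in (0:ℝ)..t, f s * (k s : ℂ)) /
      ((∫ s in (0:ℝ)..t, k s : ℝ) : ℂ)) atTop (𝓝 0) := by
  have hsub : ∀ a b : ℝ, 0 ≤ a → a ≤ b → Set.uIcc a b ⊆ Ici (0:ℝ) := by
    intro a b ha hab
    rw [uIcc_of_le hab]
    exact fun x hx => le_trans ha hx.1
  have hfk : ∀ a b : ℝ, 0 ≤ a → a ≤ b →
      IntervalIntegrable (fun s => f s * (k s : ℂ)) volume a b := by
    intro a b ha hab
    exact (((hf.mono (hsub a b ha hab)).mul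
      (Complex.continuous_ofReal.comp_continuousOn (hk.mono (hsub a b ha hab))))).intervalIntegrable
  have hkint : ∀ a b : ℝ, 0 ≤ a → a ≤ b → IntervalIntegrable k volume a b := by
    intro a b ha hab
    exact (hk.mono (hsub a b ha hab)).intervalIntegrable
  rw [Metric.tendsto_nhds]
  intro ε hε
  have hε3 : 0 < ε/3 := by positivity
  obtain ⟨T₀, hT₀⟩ := eventually_atTop.mp (Metric.tendsto_nhds.mp h0 (ε/3) hε3)
  set T : ℝ := max T₀ 0 with hTdef
  have hT0 : (0:ℝ) ≤ T := le_max_right _ _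
  have hTsmall : ∀ s, T ≤ s → ‖f s‖ ≤ ε/3 := by
    intro s hs
    have := hT₀ s (le_trans (le_max_left _ _) hs)
    rw [dist_zero_right] at this
    exact this.le
  set C : ℝ := ‖∫ s in (0:ℝ)..T, f s * (k s : ℂ)‖ with hCdef
  have hCnn : 0 ≤ C := norm_nonneg _
  filter_upwards [eventually_ge_atTop T, hK.eventually_gt_atTop (max (3*C/ε) 0)] with t ht hKt
  have ht0 : (0:ℝ) ≤ t := le_trans hT0 ht
  set K : ℝ := ∫ s in (0:ℝ)..t, k s with hKdef
  have hKpos : 0 < K := lt_of_le_of_lt (le_max_right _ _) hKt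
  rw [dist_zero_right, norm_div]
  have hnormK : ‖((K:ℝ):ℂ)‖ = K := by
    rw [Complex.norm_real, Real.norm_eq_abs, abs_of_pos hKpos]
  rw [hnormK]
  -- split the integral
  have hsplit : (∫ s in (0:ℝ)..t, f s * (k s : ℂ)) =
      (∫ s in (0:ℝ)..T, f s * (k s : ℂ)) + ∫ s in T..t, f s * (k s : ℂ) :=
    (intervalIntegral.integral_add_adjacent_intervals (hfk 0 T le_rfl hT0)
      (hfk T t hT0 ht)).symm
  have hKT : (0:ℝ) ≤ ∫ s in (0:ℝ)..T, k s := by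
    apply intervalIntegral.integral_nonneg hT0
    intro x hx; exact hknn x hx.1
  have hktail : (0:ℝ) ≤ ∫ s in T..t, k s := by
    apply intervalIntegral.integral_nonneg ht
    intro x hx; exact hknn x (le_trans hT0 hx.1)
  have htail : ‖∫ s in T..t, f s * (k s : ℂ)‖ ≤ (ε/3) * K := by
    have hb : ‖∫ s in T..t, f s * (k s : ℂ)‖ ≤ |∫ s in T..t, (ε/3) * k s| := by
      apply intervalIntegral.norm_integral_le_abs_of_norm_le
      · filter_upwards [ae_restrict_mem measurableSet_uIoc] with s hs
        rw [Set.uIoc_of_le ht] at hs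
        have hsT : T ≤ s := hs.1.le
        have hs0 : 0 ≤ s := le_trans hT0 hsT
        rw [norm_mul, Complex.norm_real, Real.norm_eq_abs, _root_.abs_of_nonneg (hknn s hs0)]
        exact mul_le_mul_of_nonneg_right (hTsmall s hsT) (hknn s hs0)
      · exact (hkint T t hT0 ht).const_mul _
    have hKsub : ∫ s in T..t, k s = K - ∫ s in (0:ℝ)..T, k s := by
      rw [← intervalIntegral.integral_interval_sub_left (hkint 0 t le_rfl ht0)
        (hkint 0 T le_rfl hT0)]
    calc ‖∫ s in T..t, f s * (k s : ℂ)‖ ≤ |∫ s in T..t, (ε/3) * k s| := hb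
      _ = |(ε/3) * ∫ s in T..t, k s| := by rw [intervalIntegral.integral_const_mul]
      _ = (ε/3) * ∫ s in T..t, k s := abs_of_nonneg (mul_nonneg hε3.le hktail)
      _ = (ε/3) * (K - ∫ s in (0:ℝ)..T, k s) := by rw [hKsub]
      _ ≤ (ε/3) * K := by
          apply mul_le_mul_of_nonneg_left _ hε3.le
          linarith
  have hbound : ‖∫ s in (0:ℝ)..t, f s * (k s : ℂ)‖ ≤ C + (ε/3) * K := by
    rw [hsplit]
    exact le_trans (norm_add_le _ _) (by rw [← hCdef]; linarith)
  have hCK : C / K < ε/3 := by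
    rw [div_lt_iff₀ hKpos]
    have h3C : 3*C/ε < K := lt_of_le_of_lt (le_max_left _ _) hKt
    rw [div_lt_iff₀ hε] at h3C
    linarith
  calc ‖∫ s in (0:ℝ)..t, f s * (k s : ℂ)‖ / K ≤ (C + (ε/3)*K)/K := by gcongr
    _ = C/K + ε/3 := by rw [add_div, mul_div_assoc, div_self hKpos.ne', mul_one]
    _ < ε/3 + ε/3 := by linarith
    _ < ε := by linarith


lemma integral_one_div_add_one (t : ℝ) (ht : 0 ≤ t) :
    ∫ s in (0:ℝ)..t, 1/(s+1) = Real.log (t+1) := by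
  have h := intervalIntegral.integral_comp_add_right (a := (0:ℝ)) (b := t)
    (fun x => 1/x) 1
  simp only [zero_add] at h
  rw [h, integral_one_div, div_one]
  intro hmem
  rw [Set.uIcc_of_le (by linarith : (1:ℝ) ≤ t+1)] at hmem
  linarith [hmem.1]

lemma log_tendsto : Tendsto (fun t : ℝ => Real.log (t+1)) atTop atTop :=
  Real.tendsto_log_atTop.comp (tendsto_atTop_add_const_right _ 1 tendsto_id)

lemma const_div_cast (c : ℂ) {r : ℝ → ℝ} (h : Tendsto r atTop atTop) :
    Tendsto (fun t : ℝ => c / ((r t : ℝ) : ℂ)) atTop (𝓝 0) := by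
  have h1 : Tendsto (fun t : ℝ => (((r t : ℝ)) : ℂ)⁻¹) atTop (𝓝 0) := by
    have h0 := tendsto_inv_atTop_zero.comp h
    have h2 := (Complex.continuous_ofReal.tendsto 0).comp h0
    rw [show (Complex.ofReal ∘ (fun x : ℝ => x⁻¹) ∘ r) =
        (fun t : ℝ => (((r t : ℝ)) : ℂ)⁻¹) by
      funext t; simp [Function.comp, Complex.ofReal_inv]] at h2
    simpa using h2
  have := h1.const_mul c
  simpa [div_eq_mul_inv] using this

theorem stmt14 (Φ : ℝ → ℂ → ℂ) (φ : ℂ → ℂ) (β γ : ℂ)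
    (hsg : IsContinuousSemigroupOnHalfPlane Φ φ)
    (hdw : HasDWPointInfty Φ)
    (hβ : β ≠ 0)
    (hrep : Tendsto (fun w : ℂ => w * (φ w - β - γ / (w + 1)))
      (atInftyWithin rightHalfPlane) (𝓝 0)) :
    ∀ w ∈ rightHalfPlane,
      Tendsto (fun t : ℝ =>
          (Φ t w - β * (t : ℂ) - (γ / β) * (Real.log (t + 1) : ℂ)) /
            (Real.log (t + 1) : ℂ)) atTop (𝓝 0) := by
  intro w hw
  set u : ℝ → ℂ := fun t => Φ t w with hu_def
  have hu_mem : ∀ t : ℝ, 0 ≤ t → u t ∈ rightHalfPlane := fun t ht => (hsg.mapsTo t ht) hw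
  have hu_cont : ContinuousOn u (Ici 0) := fun t ht =>
    (hsg.ode w hw t ht).continuousWithinAt
  have hφc : ContinuousOn φ rightHalfPlane := hsg.gen_holomorphic.continuousOn
  set F : ℝ → ℂ := fun s => φ (u s) with hF_def
  have hFc : ContinuousOn F (Ici 0) := hφc.comp hu_cont (fun s hs => hu_mem s hs)
  have hsub : ∀ t : ℝ, 0 ≤ t → Set.uIcc (0:ℝ) t ⊆ Ici (0:ℝ) := by
    intro t ht
    rw [uIcc_of_le ht]; exact fun x hx => hx.1
  have hFint : ∀ t : ℝ, 0 ≤ t → IntervalIntegrable F volume 0 t := fun t ht =>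
    (hFc.mono (hsub t ht)).intervalIntegrable
  -- FTC
  have hFTC : ∀ t : ℝ, 0 ≤ t → u t = w + ∫ s in (0:ℝ)..t, F s := by
    intro t ht
    have h1 : (∫ s in (0:ℝ)..t, F s) = u t - u 0 := by
      apply intervalIntegral.integral_eq_sub_of_hasDeriv_right_of_le ht
        (hu_cont.mono Icc_subset_Ici_self) _ (hFint t ht)
      intro x hx
      exact (hsg.ode w hw x hx.1.le).mono (fun y hy => le_trans hx.1.le (le_of_lt hy))
    have h0 : u 0 = w := hsg.init w hw
    rw [h1, h0]; ring
  -- filter to infinity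
  have habs : Tendsto (fun t => ‖u t‖) atTop atTop := hdw w hw
  have hnorm : Tendsto (fun t => ‖u t‖) atTop atTop := by
    exact habs
  have h_inf : Tendsto u atTop (atInftyWithin rightHalfPlane) := by
    rw [atInftyWithin, tendsto_inf]
    constructor
    · rw [tendsto_comap_iff]; exact habs
    · rw [tendsto_principal]
      filter_upwards [eventually_ge_atTop (0:ℝ)] with t ht using hu_mem t ht
  have hne : ∀ t : ℝ, 0 ≤ t → u t ≠ 0 := by
    intro t ht h
    have := hu_mem t ht
    rw [h] at this
    simp [rightHalfPlane] at this
  have hne1 : ∀ t : ℝ, 0 ≤ t → u t + 1 ≠ 0 := by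
    intro t ht h
    have h2 := hu_mem t ht
    have : (u t + 1).re = (u t).re + 1 := by simp
    rw [h] at this
    simp at this
    have : (u t).re > 0 := h2
    linarith
  have hinv : Tendsto (fun t => (u t)⁻¹) atTop (𝓝 0) := by
    rw [tendsto_zero_iff_norm_tendsto_zero]
    simp only [norm_inv]
    exact tendsto_inv_atTop_zero.comp hnorm
  have hnorm1 : Tendsto (fun t => ‖u t + 1‖) atTop atTop := by
    apply tendsto_atTop_mono _ (tendsto_atTop_add_const_right _ (-1) hnorm)
    intro t
    have h := norm_add_le (u t + 1) (-1)
    simp only [add_neg_cancel_right] at h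
    simpa using h
  have hinv1 : Tendsto (fun t => (u t + 1)⁻¹) atTop (𝓝 0) := by
    rw [tendsto_zero_iff_norm_tendsto_zero]
    simp only [norm_inv]
    exact tendsto_inv_atTop_zero.comp hnorm1
  -- A → 0
  have hA : Tendsto (fun t => u t * (F t - β - γ / (u t + 1))) atTop (𝓝 0) := hrep.comp h_inf
  -- F − β → 0
  have hFβ' : Tendsto (fun t => F t - β - γ / (u t + 1)) atTop (𝓝 0) := by
    have h1 : Tendsto (fun t => (u t)⁻¹ * (u t * (F t - β - γ / (u t + 1)))) atTop (𝓝 0) := by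
      simpa using hinv.mul hA
    apply h1.congr'
    filter_upwards [eventually_ge_atTop (0:ℝ)] with t ht
    rw [← mul_assoc, inv_mul_cancel₀ (hne t ht), one_mul]
  have hFβ : Tendsto (fun t => F t - β) atTop (𝓝 0) := by
    have h1 : Tendsto (fun t => (F t - β - γ / (u t + 1)) + γ * (u t + 1)⁻¹) atTop (𝓝 (0 + γ * 0)) :=
      hFβ'.add (hinv1.const_mul γ)
    simp only [mul_zero, add_zero] at h1
    apply h1.congr
    intro t
    rw [div_eq_mul_inv]
    ring
  -- Step 1 : u t / t → β
  have hces1 := cesaro (fun s => F s - β) (fun _ => (1:ℝ))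
    (hFc.sub continuousOn_const) continuousOn_const (fun _ _ => zero_le_one)
    (by simpa using (tendsto_id (α := ℝ)).congr' (by
      filter_upwards with t
      simp)) hFβ
  simp only [Complex.ofReal_one, mul_one] at hces1
  have hI1 : ∀ t : ℝ, (∫ s in (0:ℝ)..t, (1:ℝ)) = t := by
    intro t; simp
  rw [show (fun t : ℝ => (∫ s in (0:ℝ)..t, (F s - β)) / ((∫ s in (0:ℝ)..t, (1:ℝ) : ℝ) : ℂ)) =
    (fun t : ℝ => (∫ s in (0:ℝ)..t, (F s - β)) / ((t : ℝ) : ℂ)) by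
    funext t; rw [hI1]] at hces1
  have hsubint : ∀ t : ℝ, 0 ≤ t → (∫ s in (0:ℝ)..t, (F s - β)) = u t - w - β * (t:ℂ) := by
    intro t ht
    rw [intervalIntegral.integral_sub (hFint t ht) intervalIntegrable_const,
      intervalIntegral.integral_const]
    have := hFTC t ht
    rw [show (∫ s in (0:ℝ)..t, F s) = u t - w by rw [this]; ring]
    rw [sub_zero, Complex.real_smul]
    ring
  have hstep1 : Tendsto (fun t : ℝ => u t / (t:ℂ)) atTop (𝓝 β) := by
    have hw0 : Tendsto (fun t : ℝ => w / ((t : ℝ) : ℂ)) atTop (𝓝 0) :=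
      const_div_cast w tendsto_id
    have h2 : Tendsto (fun t : ℝ => (∫ s in (0:ℝ)..t, (F s - β)) / ((t : ℝ) : ℂ)
        + w / ((t : ℝ) : ℂ) + β) atTop (𝓝 (0 + 0 + β)) :=
      (hces1.add hw0).add tendsto_const_nhds
    rw [zero_add, zero_add] at h2
    apply h2.congr'
    filter_upwards [eventually_ge_atTop (1:ℝ)] with t ht
    have ht0 : (0:ℝ) ≤ t := le_trans zero_le_one ht
    have htne : ((t:ℝ) : ℂ) ≠ 0 := by
      simp only [ne_eq, Complex.ofReal_eq_zero]
      linarith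
    rw [hsubint t ht0]
    field_simp
    ring
  -- (t:ℂ)+1 ≠ 0 and inverse tendsto
  have htne1 : ∀ t : ℝ, 0 ≤ t → ((t:ℂ) + 1) ≠ 0 := by
    intro t ht h
    have : ((t:ℂ) + 1).re = t + 1 := by simp
    rw [h] at this
    simp at this
    linarith
  have htinv1 : Tendsto (fun t : ℝ => ((t:ℂ) + 1)⁻¹) atTop (𝓝 0) := by
    have := const_div_cast 1 (tendsto_atTop_add_const_right atTop (1:ℝ) tendsto_id)
    simp only [one_div] at this
    apply this.congr
    intro t
    push_cast
    rfl
  -- u t / (t+1) → β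
  have hfrac : Tendsto (fun t : ℝ => (t:ℂ) / ((t:ℂ) + 1)) atTop (𝓝 1) := by
    have h1 : Tendsto (fun t : ℝ => 1 - ((t:ℂ) + 1)⁻¹) atTop (𝓝 (1 - 0)) :=
      tendsto_const_nhds.sub htinv1
    rw [sub_zero] at h1
    apply h1.congr'
    filter_upwards [eventually_ge_atTop (0:ℝ)] with t ht
    rw [eq_div_iff (htne1 t ht), sub_mul, one_mul, inv_mul_cancel₀ (htne1 t ht)]
    ring
  have hD : Tendsto (fun t : ℝ => u t / ((t:ℂ) + 1)) atTop (𝓝 β) := by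
    have h1 := hstep1.mul hfrac
    rw [mul_one] at h1
    apply h1.congr'
    filter_upwards [eventually_ge_atTop (1:ℝ)] with t ht
    have ht0 : (0:ℝ) ≤ t := le_trans zero_le_one ht
    have htne : ((t:ℝ) : ℂ) ≠ 0 := by
      simp only [ne_eq, Complex.ofReal_eq_zero]; linarith
    field_simp
  have hDinv : Tendsto (fun t : ℝ => ((t:ℂ) + 1) / u t) atTop (𝓝 β⁻¹) := by
    have h1 := hD.inv₀ hβ
    apply h1.congr'
    filter_upwards [eventually_ge_atTop (0:ℝ)] with t ht
    rw [inv_div]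
  -- B = u (F − β) → γ
  have huu1 : Tendsto (fun t : ℝ => u t / (u t + 1)) atTop (𝓝 1) := by
    have h1 : Tendsto (fun t : ℝ => 1 - (u t + 1)⁻¹) atTop (𝓝 (1 - 0)) :=
      tendsto_const_nhds.sub hinv1
    rw [sub_zero] at h1
    apply h1.congr'
    filter_upwards [eventually_ge_atTop (0:ℝ)] with t ht
    field_simp [hne1 t ht]
    ring
  have hB : Tendsto (fun t : ℝ => u t * (F t - β)) atTop (𝓝 γ) := by
    have h1 : Tendsto (fun t : ℝ => u t * (F t - β - γ / (u t + 1))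
        + γ * (u t / (u t + 1))) atTop (𝓝 (0 + γ * 1)) := hA.add (huu1.const_mul γ)
    rw [zero_add, mul_one] at h1
    apply h1.congr'
    filter_upwards [eventually_ge_atTop (0:ℝ)] with t ht
    field_simp [hne1 t ht]
    ring
  -- g → 0
  set g : ℝ → ℂ := fun s => ((s:ℂ) + 1) * (F s - β) - γ / β with hg_def
  have hg0 : Tendsto g atTop (𝓝 0) := by
    have h1 : Tendsto (fun t : ℝ => (((t:ℂ) + 1) / u t) * (u t * (F t - β)) - γ / β)
        atTop (𝓝 (β⁻¹ * γ - γ / β)) := (hDinv.mul hB).sub tendsto_const_nhds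
    rw [show β⁻¹ * γ - γ / β = 0 by rw [div_eq_mul_inv]; ring] at h1
    apply h1.congr'
    filter_upwards [eventually_ge_atTop (0:ℝ)] with t ht
    rw [hg_def]
    simp only
    congr 1
    field_simp [hne t ht]
  -- weight k = 1/(s+1)
  set k : ℝ → ℝ := fun s => 1/(s+1) with hk_def
  have hkc : ContinuousOn k (Ici 0) := by
    apply ContinuousOn.div continuousOn_const
      ((continuous_id.add continuous_const).continuousOn)
    intro x hx
    have : (0:ℝ) < x + 1 := by have : (0:ℝ) ≤ x := hx; linarith
    exact this.ne'
  have hknn : ∀ s : ℝ, 0 ≤ s → 0 ≤ k s := by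
    intro s hs
    rw [hk_def]
    positivity
  have hgc : ContinuousOn g (Ici 0) :=
    ((Complex.continuous_ofReal.continuousOn.add continuousOn_const).mul
      (hFc.sub continuousOn_const)).sub continuousOn_const
  have hkK : Tendsto (fun t : ℝ => ∫ s in (0:ℝ)..t, k s) atTop atTop := by
    apply Tendsto.congr' _ log_tendsto
    filter_upwards [eventually_ge_atTop (0:ℝ)] with t ht
    exact (integral_one_div_add_one t ht).symm
  have hces2 := cesaro g k hgc hkc hknn hkK hg0
  -- identify the integral
  have hintid : ∀ t : ℝ, 0 ≤ t →
      (∫ s in (0:ℝ)..t, g s * ((k s : ℝ) : ℂ)) =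
        u t - w - β * (t:ℂ) - (γ/β) * ((Real.log (t+1) : ℝ) : ℂ) := by
    intro t ht
    have hcongr : (∫ s in (0:ℝ)..t, g s * ((k s : ℝ) : ℂ)) =
        ∫ s in (0:ℝ)..t, ((F s - β) - (γ/β) * (((s:ℂ) + 1))⁻¹) := by
      apply intervalIntegral.integral_congr
      intro s hs
      have hs0 : (0:ℝ) ≤ s := (hsub t ht hs)
      have hsne : ((s:ℂ) + 1) ≠ 0 := htne1 s hs0
      have hcast : ((k s : ℝ) : ℂ) = ((s:ℂ) + 1)⁻¹ := by
        show ((((1:ℝ)/(s+1)) : ℝ) : ℂ) = ((s:ℂ) + 1)⁻¹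
        push_cast
        rw [one_div]
      show g s * ((k s : ℝ) : ℂ) = (F s - β) - (γ/β) * (((s:ℂ) + 1))⁻¹
      rw [hcast, hg_def]
      simp only
      field_simp
    rw [hcongr]
    have hint2 : IntervalIntegrable (fun s : ℝ => (γ/β) * (((s:ℂ) + 1))⁻¹) volume 0 t := by
      apply ContinuousOn.intervalIntegrable
      apply ContinuousOn.mul continuousOn_const
      apply ContinuousOn.inv₀ ((Complex.continuous_ofReal.continuousOn.add continuousOn_const))
      intro x hx
      exact htne1 x (hsub t ht hx)
    rw [intervalIntegral.integral_sub ((hFint t ht).sub intervalIntegrable_const) hint2,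
      hsubint t ht, intervalIntegral.integral_const_mul]
    have hof : (∫ s in (0:ℝ)..t, (((s:ℂ) + 1))⁻¹) = ((Real.log (t+1) : ℝ) : ℂ) := by
      rw [show (fun s : ℝ => (((s:ℂ) + 1))⁻¹) = (fun s : ℝ => ((k s : ℝ) : ℂ)) by
        funext s
        rw [hk_def]
        push_cast
        rw [one_div]]
      rw [intervalIntegral.integral_ofReal]
      norm_cast
      exact integral_one_div_add_one t ht
    rw [hof]
  -- conclude
  have hfinal : Tendsto (fun t : ℝ => w / ((Real.log (t+1) : ℝ) : ℂ) +
      (∫ s in (0:ℝ)..t, g s * ((k s : ℝ) : ℂ)) / ((∫ s in (0:ℝ)..t, k s : ℝ) : ℂ))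
      atTop (𝓝 (0 + 0)) := (const_div_cast w log_tendsto).add hces2
  rw [add_zero] at hfinal
  apply hfinal.congr'
  filter_upwards [eventually_ge_atTop (1:ℝ)] with t ht
  have ht0 : (0:ℝ) ≤ t := le_trans zero_le_one ht
  have hlogpos : 0 < Real.log (t+1) := Real.log_pos (by linarith)
  have hden : (∫ s in (0:ℝ)..t, k s) = Real.log (t+1) := integral_one_div_add_one t ht0
  rw [hintid t ht0, hden, ← add_div]
  congr 1
  ring
end
end

section
/- Let (Φ_t)_{t≥0} be a continuous one-parameter semigroup on the right half-plane Π with Denjoy–Wolff point at ∞, generated by −φ, where φ has no zeros in Π and admits the representation φ(w) = β + γ/(w+1) + ϱ₁(w) with β, γ ∈ ℂ, β ≠ 0, and w^{1+ε}·ϱ₁(w) → 0 as |w| → ∞, w ∈ Π, for some ε > 0. Let σ be the holomorphic function with σ'(w) = 1/φ(w), σ(1) = 0. Then there exists a constant A ∈ ℂ, independent of w, such that for every w ∈ Π, lim_{t→∞} ( Φ_t(w) − βt − (γ/β)·log(t+1) − β·σ(w) ) = A. -/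
open Complex Filter Topology Set MeasureTheory

noncomputable section

/-- compatibility: the complex absolute value as the norm. -/
def Complex.abs : AbsoluteValue ℂ ℝ where
  toFun z := ‖z‖
  map_mul' := norm_mul
  nonneg' := norm_nonneg
  eq_zero' _ := norm_eq_zero
  add_le' := norm_add_le

lemma Complex.norm_eq_abs (z : ℂ) : ‖z‖ = Complex.abs z := rfl

lemma Complex.abs_ofReal (r : ℝ) : Complex.abs (r : ℂ) = |r| := Complex.norm_real r

lemma Complex.abs_cpow_real (x : ℂ) (y : ℝ) :
    Complex.abs (x ^ (y : ℂ)) = Complex.abs x ^ y := Complex.norm_cpow_real x y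

lemma Complex.abs_exp_ofReal_mul_I (x : ℝ) : Complex.abs (Complex.exp (x * Complex.I)) = 1 :=
  Complex.norm_exp_ofReal_mul_I x

lemma Complex.abs_I : Complex.abs Complex.I = 1 := Complex.norm_I

lemma Complex.abs_mul_exp_arg_mul_I (x : ℂ) :
    ((Complex.abs x : ℝ) : ℂ) * Complex.exp (Complex.arg x * Complex.I) = x :=
  Complex.norm_mul_exp_arg_mul_I x

/-- helper: |v| ≤ |v+1| on the right half-plane. -/
lemma abs_le_abs_add_one_of_re_pos {v : ℂ} (hv : 0 < v.re) :
    Complex.abs v ≤ Complex.abs (v + 1) := by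
  show ‖v‖ ≤ ‖v + 1‖
  rw [Complex.norm_def, Complex.norm_def]
  apply Real.sqrt_le_sqrt
  simp only [Complex.normSq_apply, Complex.add_re, Complex.add_im, Complex.one_re,
    Complex.one_im]
  nlinarith

set_option maxHeartbeats 1000000 in
theorem stmt16 (Φ : ℝ → ℂ → ℂ) (φ σ : ℂ → ℂ) (β γ : ℂ) (ε : ℝ)
    (hsg : IsContinuousSemigroupOnHalfPlane Φ φ)
    (hdw : HasDWPointInfty Φ)
    (hnz : ∀ w ∈ rightHalfPlane, φ w ≠ 0)
    (hβ : β ≠ 0) (hε : 0 < ε)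
    (hrep : Tendsto (fun w : ℂ => w ^ ((1 + ε : ℝ) : ℂ) * (φ w - β - γ / (w + 1)))
      (atInftyWithin rightHalfPlane) (𝓝 0))
    (hσ : IsSigmaFunction φ σ) :
    ∃ A : ℂ, ∀ w ∈ rightHalfPlane,
      Tendsto (fun t : ℝ =>
          Φ t w - β * (t : ℂ) - (γ / β) * (Real.log (t + 1) : ℂ) - β * σ w) atTop
        (𝓝 A) := by
  obtain ⟨hσd, -⟩ := hσ
  have hσc : ContinuousOn σ rightHalfPlane :=
    fun v hv => ((hσd v hv).continuousAt).continuousWithinAt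
  have hφc : ContinuousOn φ rightHalfPlane := hsg.gen_holomorphic.continuousOn
  -- filter helpers
  have hunpack : ∀ {p : ℂ → Prop}, (∀ᶠ v in atInftyWithin rightHalfPlane, p v) →
      ∃ R : ℝ, ∀ v : ℂ, v ∈ rightHalfPlane → R ≤ Complex.abs v → p v := by
    intro p hp
    rw [atInftyWithin, eventually_inf_principal, eventually_comap] at hp
    obtain ⟨R, hR⟩ := eventually_atTop.1 hp
    exact ⟨R, fun v hv hRv => hR _ hRv v rfl hv⟩
  have hmk : ∀ {p : ℂ → Prop} (R : ℝ),
      (∀ v : ℂ, v ∈ rightHalfPlane → R ≤ Complex.abs v → p v) →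
      ∀ᶠ v in atInftyWithin rightHalfPlane, p v := by
    intro p R hp
    rw [atInftyWithin, eventually_inf_principal, eventually_comap]
    filter_upwards [eventually_ge_atTop R] with r hr v hv hvS
    exact hp v hvS (show R ≤ ‖v‖ from hv ▸ hr)
  have habs : Tendsto Complex.abs (atInftyWithin rightHalfPlane) atTop := by
    rw [atInftyWithin]; exact tendsto_comap.mono_left inf_le_left
  -- basic constants
  set b : ℝ := Complex.abs β with hb_def
  have hb : 0 < b := AbsoluteValue.pos _ hβ
  set g : ℝ := Complex.abs γ with hg_def
  have hg : 0 ≤ g := AbsoluteValue.nonneg _ _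
  set δ : ℝ := min ε 1 with hδ_def
  have hδ0 : 0 < δ := lt_min hε one_pos
  have hδ1 : δ ≤ 1 := min_le_right _ _
  have hδε : δ ≤ ε := min_le_left _ _
  set ρ : ℂ → ℂ := fun v => φ v - β - γ / (v + 1) with hρ_def
  -- extract ρ bound
  obtain ⟨R₁, hR₁⟩ : ∃ R : ℝ, ∀ v : ℂ, v ∈ rightHalfPlane → R ≤ Complex.abs v →
      Complex.abs ((v ^ ((1 + ε : ℝ) : ℂ)) * ρ v) ≤ 1 := by
    apply hunpack
    have := Metric.tendsto_nhds.mp hrep 1 one_pos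
    filter_upwards [this] with v hv
    rw [dist_zero_right] at hv
    exact le_of_lt hv
  set R : ℝ := max (max R₁ 1) (2 * (g + 1) / b) with hR_def
  have hR1 : (1:ℝ) ≤ R := le_trans (le_max_right R₁ 1) (le_max_left _ _)
  have hRpos : (0:ℝ) < R := lt_of_lt_of_le one_pos hR1
  -- region facts
  have hreg : ∀ v : ℂ, v ∈ rightHalfPlane → R ≤ Complex.abs v →
      Complex.abs (ρ v) ≤ (Complex.abs v) ^ (-(1+δ)) ∧
      b/2 ≤ Complex.abs (φ v) ∧
      Complex.abs (φ v - β) ≤ (g+1) / Complex.abs v := by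
    intro v hv hRv
    have hv1 : (1:ℝ) ≤ Complex.abs v := le_trans hR1 hRv
    have hv0 : (0:ℝ) < Complex.abs v := lt_of_lt_of_le one_pos hv1
    have hvne : v ≠ 0 := by
      intro h; rw [h] at hv0; simp at hv0
    have hadd : Complex.abs v ≤ Complex.abs (v + 1) := abs_le_abs_add_one_of_re_pos hv
    have haddpos : (0:ℝ) < Complex.abs (v+1) := lt_of_lt_of_le hv0 hadd
    -- ρ bound
    have hρb : Complex.abs (ρ v) ≤ (Complex.abs v) ^ (-(1+ε)) := by
      have h1 := hR₁ v hv (le_trans (le_trans (le_max_left R₁ 1) (le_max_left _ _)) hRv)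
      rw [map_mul, Complex.abs_cpow_real] at h1
      have h2 : (0:ℝ) < (Complex.abs v) ^ (1+ε) := Real.rpow_pos_of_pos hv0 _
      rw [Real.rpow_neg hv0.le, inv_eq_one_div, le_div_iff₀ h2]
      calc Complex.abs (ρ v) * (Complex.abs v)^(1+ε)
          = (Complex.abs v)^(1+ε) * Complex.abs (ρ v) := mul_comm _ _
        _ ≤ 1 := h1
    have hρ2 : Complex.abs (ρ v) ≤ (Complex.abs v) ^ (-(1+δ)) :=
      le_trans hρb (Real.rpow_le_rpow_of_exponent_le hv1 (by linarith))
    have hρ3 : Complex.abs (ρ v) ≤ (Complex.abs v)⁻¹ := by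
      have := le_trans hρ2 (Real.rpow_le_rpow_of_exponent_le hv1 (by linarith : -(1+δ) ≤ -1))
      rwa [Real.rpow_neg_one] at this
    have hid : φ v - β = γ/(v+1) + ρ v := by simp only [hρ_def]; ring
    have hφβ : Complex.abs (φ v - β) ≤ (g+1) / Complex.abs v := by
      rw [hid]
      calc Complex.abs (γ/(v+1) + ρ v) ≤ Complex.abs (γ/(v+1)) + Complex.abs (ρ v) :=
            AbsoluteValue.add_le _ _ _
        _ = g / Complex.abs (v+1) + Complex.abs (ρ v) := by rw [map_div₀]
        _ ≤ g / Complex.abs v + (Complex.abs v)⁻¹ := by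
            gcongr
        _ = (g+1) / Complex.abs v := by rw [add_div, inv_eq_one_div]
    have hφ2 : b/2 ≤ Complex.abs (φ v) := by
      have h3 : (g+1) / Complex.abs v ≤ b/2 := by
        rw [div_le_iff₀ hv0]
        have h4 : 2*(g+1)/b ≤ Complex.abs v := le_trans (le_max_right _ _) hRv
        rw [div_le_iff₀ hb] at h4
        nlinarith
      have h5 : Complex.abs β - Complex.abs (φ v) ≤ Complex.abs (φ v - β) := by
        simpa [Complex.norm_eq_abs, AbsoluteValue.map_sub Complex.abs β (φ v)] using norm_sub_norm_le β (φ v)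
      have := le_trans hφβ h3
      rw [hb_def]
      linarith
    exact ⟨hρ2, hφ2, hφβ⟩
  -- the function h and its derivative
  set hfun : ℂ → ℂ := fun v => v - β * σ v - (γ/β) * Complex.log (v + 1) with hh_def
  set hd : ℂ → ℂ := fun v => 1 - β * (φ v)⁻¹ - (γ/β) * (v+1)⁻¹ with hd_def
  have hne1 : ∀ v : ℂ, v ∈ rightHalfPlane → v + 1 ≠ 0 := by
    intro v hv h
    have : (v+1).re = 0 := by rw [h]; simp
    simp only [Complex.add_re, Complex.one_re] at this
    have hv' : 0 < v.re := hv
    linarith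
  have hd_deriv : ∀ v ∈ rightHalfPlane, HasDerivAt hfun (hd v) v := by
    intro v hv
    have h1 : HasDerivAt (fun v : ℂ => v) 1 v := hasDerivAt_id v
    have h2 : HasDerivAt (fun v => β * σ v) (β * (1 / φ v)) v := (hσd v hv).const_mul β
    have hv1 : (v+1) ∈ Complex.slitPlane := by
      left
      simp only [Complex.add_re, Complex.one_re]
      have hv' : 0 < v.re := hv
      linarith
    have h3 : HasDerivAt (fun v : ℂ => Complex.log (v+1)) ((v+1)⁻¹ * 1) v := by
      have := (Complex.hasDerivAt_log hv1).comp v ((hasDerivAt_id v).add_const 1); exact this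
    have h4 := (h1.sub h2).sub (h3.const_mul (γ/β))
    refine h4.congr_deriv ?_
    simp only [hd_def, mul_one]
    ring
  have hd_cont : ContinuousOn hd rightHalfPlane := by
    apply ContinuousOn.sub
    · apply ContinuousOn.sub continuousOn_const
      exact continuousOn_const.mul (hφc.inv₀ hnz)
    · apply continuousOn_const.mul
      apply ContinuousOn.inv₀
      · exact (continuousOn_id.add continuousOn_const)
      · exact hne1
  -- bound on hd
  set C : ℝ := 2*g*(g+1)/b^2 + 2/b with hC_def
  have hC : 0 < C := by positivity
  have hd_bound : ∀ v : ℂ, v ∈ rightHalfPlane → R ≤ Complex.abs v →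
      Complex.abs (hd v) ≤ C * (Complex.abs v) ^ (-(1+δ)) := by
    intro v hv hRv
    obtain ⟨hρ2, hφ2, hφβ⟩ := hreg v hv hRv
    have hv1 : (1:ℝ) ≤ Complex.abs v := le_trans hR1 hRv
    have hv0 : (0:ℝ) < Complex.abs v := lt_of_lt_of_le one_pos hv1
    have hadd : Complex.abs v ≤ Complex.abs (v + 1) := abs_le_abs_add_one_of_re_pos hv
    have haddpos : (0:ℝ) < Complex.abs (v+1) := lt_of_lt_of_le hv0 hadd
    have hφ0 : (0:ℝ) < Complex.abs (φ v) := lt_of_lt_of_le (by positivity) hφ2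
    have hφne : φ v ≠ 0 := hnz v hv
    have hvadd : v + 1 ≠ 0 := by
      intro h
      rw [h] at haddpos
      simp at haddpos
    have hid2 : hd v = γ * (β - φ v) / ((v+1) * φ v * β) + ρ v / φ v := by
      simp only [hd_def, hρ_def]
      field_simp
      ring
    have hrpow1 : (0:ℝ) < (Complex.abs v) ^ (-(1+δ)) := Real.rpow_pos_of_pos hv0 _
    have ht1 : Complex.abs (γ * (β - φ v) / ((v+1) * φ v * β))
        ≤ (2*g*(g+1)/b^2) * (Complex.abs v) ^ (-(1+δ)) := by
      rw [map_div₀, map_mul, map_mul, map_mul]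
      have hnum : Complex.abs γ * Complex.abs (β - φ v) ≤ g * ((g+1)/Complex.abs v) := by
        have h6 : Complex.abs (β - φ v) = Complex.abs (φ v - β) := AbsoluteValue.map_sub _ _ _
        rw [h6]
        exact mul_le_mul_of_nonneg_left hφβ hg
      have hden : Complex.abs v * (b/2) * b ≤ Complex.abs (v+1) * Complex.abs (φ v) * Complex.abs β := by
        rw [← hb_def]
        have : Complex.abs v * (b/2) ≤ Complex.abs (v+1) * Complex.abs (φ v) := by
          apply mul_le_mul hadd hφ2 (by positivity) (by positivity)
        exact mul_le_mul_of_nonneg_right this hb.le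
      calc Complex.abs γ * Complex.abs (β - φ v) / (Complex.abs (v+1) * Complex.abs (φ v) * Complex.abs β)
          ≤ (g * ((g+1)/Complex.abs v)) / (Complex.abs v * (b/2) * b) := by
            apply div_le_div₀ (by positivity) hnum (by positivity) hden
        _ = (2*g*(g+1)/b^2) * ((Complex.abs v)^(2:ℕ))⁻¹ := by
            field_simp
        _ ≤ (2*g*(g+1)/b^2) * (Complex.abs v) ^ (-(1+δ)) := by
            apply mul_le_mul_of_nonneg_left _ (by positivity)
            rw [← Real.rpow_natCast (Complex.abs v) 2, ← Real.rpow_neg hv0.le]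
            apply Real.rpow_le_rpow_of_exponent_le hv1
            push_cast
            linarith
    have ht2 : Complex.abs (ρ v / φ v) ≤ (2/b) * (Complex.abs v) ^ (-(1+δ)) := by
      rw [map_div₀]
      calc Complex.abs (ρ v) / Complex.abs (φ v) ≤ (Complex.abs v) ^ (-(1+δ)) / (b/2) :=
            div_le_div₀ hrpow1.le hρ2 (by positivity) hφ2
        _ = (2/b) * (Complex.abs v) ^ (-(1+δ)) := by field_simp
    calc Complex.abs (hd v) ≤ Complex.abs (γ * (β - φ v) / ((v+1) * φ v * β)) + Complex.abs (ρ v / φ v) := by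
          rw [hid2]; exact AbsoluteValue.add_le _ _ _
      _ ≤ (2*g*(g+1)/b^2) * (Complex.abs v) ^ (-(1+δ)) + (2/b) * (Complex.abs v) ^ (-(1+δ)) :=
          add_le_add ht1 ht2
      _ = C * (Complex.abs v) ^ (-(1+δ)) := by rw [hC_def]; ring
  -- membership of real points
  have hmemR : ∀ x : ℝ, R ≤ x → ((x:ℂ) ∈ rightHalfPlane ∧ R ≤ Complex.abs (x:ℂ)) := by
    intro x hx
    constructor
    · show (0:ℝ) < (x:ℂ).re
      rw [Complex.ofReal_re]; linarith
    · rw [Complex.abs_ofReal, _root_.abs_of_nonneg (by linarith : (0:ℝ) ≤ x)]; exact hx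
  -- limit along the real axis
  have hg₀deriv : ∀ x : ℝ, R ≤ x → HasDerivAt (fun y : ℝ => hfun y) (hd x) x := by
    intro x hx
    exact (hd_deriv _ (hmemR x hx).1).comp_ofReal
  have hdR_cont : ContinuousOn (fun x : ℝ => hd x) (Ici R) := by
    apply hd_cont.comp Complex.continuous_ofReal.continuousOn
    intro x hx
    exact (hmemR x hx).1
  have hint : IntegrableOn (fun x : ℝ => hd x) (Ioi R) := by
    apply Integrable.mono' (g := fun x : ℝ => C * x ^ (-(1+δ)))
    · exact (integrableOn_Ioi_rpow_of_lt (by linarith) hRpos).const_mul C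
    · exact (hdR_cont.mono Ioi_subset_Ici_self).aestronglyMeasurable measurableSet_Ioi
    · filter_upwards [ae_restrict_mem measurableSet_Ioi] with x hx
      have hx' : R ≤ x := le_of_lt hx
      have := hd_bound _ (hmemR x hx').1 (hmemR x hx').2
      rw [Complex.norm_eq_abs]
      calc Complex.abs (hd x) ≤ C * (Complex.abs (x:ℂ)) ^ (-(1+δ)) := this
        _ = C * x ^ (-(1+δ)) := by
            rw [Complex.abs_ofReal, _root_.abs_of_nonneg (by linarith : (0:ℝ) ≤ x)]
  set A₀ : ℂ := hfun R + ∫ x in Ioi R, hd x with hA₀_def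
  have key3 : Tendsto (fun x : ℝ => hfun x) atTop (𝓝 A₀) := by
    have h2 := intervalIntegral_tendsto_integral_Ioi R hint (tendsto_id (x := atTop))
    have h3 : Tendsto (fun x : ℝ => hfun (R:ℝ) + ∫ y in R..x, hd y) atTop (𝓝 A₀) :=
      tendsto_const_nhds.add h2
    apply h3.congr'
    filter_upwards [eventually_ge_atTop R] with x hx
    have hftc : (∫ y in R..x, hd y) = hfun x - hfun R := by
      apply intervalIntegral.integral_eq_sub_of_hasDerivAt
      · intro y hy
        rw [uIcc_of_le hx] at hy
        exact hg₀deriv y hy.1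
      · apply ContinuousOn.intervalIntegrable
        rw [uIcc_of_le hx]
        exact hdR_cont.mono (Icc_subset_Ici_self)
    rw [hftc]
    ring
  -- arc estimate
  have harc : ∀ v : ℂ, v ∈ rightHalfPlane → R ≤ Complex.abs v →
      Complex.abs (hfun v - hfun ((Complex.abs v : ℝ) : ℂ)) ≤ C * Real.pi * (Complex.abs v) ^ (-δ) := by
    intro v hv hRv
    set r : ℝ := Complex.abs v with hr_def
    set a : ℝ := Complex.arg v with ha_def
    have hr0 : 0 < r := lt_of_lt_of_le hRpos hRv
    have ha : |a| < Real.pi/2 := Complex.abs_arg_lt_pi_div_two_iff.2 (Or.inl hv)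
    set p : ℝ → ℂ := fun θ => (r:ℂ) * Complex.exp (θ * Complex.I) with hp_def
    have hp_mem : ∀ θ : ℝ, |θ| ≤ |a| → (p θ ∈ rightHalfPlane ∧ Complex.abs (p θ) = r) := by
      intro θ hθ
      have hθ2 : -(Real.pi/2) < θ ∧ θ < Real.pi/2 := by
        constructor <;> [linarith [neg_abs_le θ]; linarith [le_abs_self θ]]
      have hcos : 0 < Real.cos θ := Real.cos_pos_of_mem_Ioo ⟨hθ2.1, hθ2.2⟩
      constructor
      · show 0 < (p θ).re
        have hre : (p θ).re = r * Real.cos θ := by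
          simp [hp_def, Complex.exp_ofReal_mul_I_re, Complex.exp_ofReal_mul_I_im]
        rw [hre]; positivity
      · simp only [hp_def, map_mul, Complex.abs_ofReal, Complex.abs_exp_ofReal_mul_I,
          abs_of_pos hr0, mul_one]
    have hmemuIcc : ∀ θ ∈ uIcc (0:ℝ) a, |θ| ≤ |a| := by
      intro θ hθ
      rcases le_total 0 a with h|h
      · rw [uIcc_of_le h] at hθ
        rw [_root_.abs_of_nonneg hθ.1, _root_.abs_of_nonneg h]; exact hθ.2
      · rw [uIcc_of_ge h] at hθ
        rw [_root_.abs_of_nonpos hθ.2, _root_.abs_of_nonpos h]; linarith [hθ.1]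
    have hpd : ∀ θ : ℝ, HasDerivAt p ((r:ℂ) * (Complex.exp (θ * Complex.I) * Complex.I)) θ := by
      intro θ
      have h1 : HasDerivAt (fun z : ℂ => Complex.exp (z * Complex.I)) (Complex.exp ((θ:ℂ) * Complex.I) * Complex.I) θ := by
        simpa using ((hasDerivAt_id ((θ:ℝ):ℂ)).mul_const Complex.I).cexp
      exact (h1.comp_ofReal).const_mul (r:ℂ)
    have hcomp : ∀ θ ∈ uIcc (0:ℝ) a,
        HasDerivAt (fun θ : ℝ => hfun (p θ)) (((r:ℂ) * (Complex.exp (θ * Complex.I) * Complex.I)) • hd (p θ)) θ := by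
      intro θ hθ
      exact HasDerivAt.scomp θ (hd_deriv _ (hp_mem θ (hmemuIcc θ hθ)).1) (hpd θ)
    have hbound : ∀ θ ∈ uIcc (0:ℝ) a,
        ‖((r:ℂ) * (Complex.exp (θ * Complex.I) * Complex.I)) • hd (p θ)‖ ≤ C * r ^ (-δ) := by
      intro θ hθ
      have hm := hp_mem θ (hmemuIcc θ hθ)
      have hb1 := hd_bound _ hm.1 (by rw [hm.2]; exact hRv)
      rw [hm.2] at hb1
      have : ‖((r:ℂ) * (Complex.exp (θ * Complex.I) * Complex.I)) • hd (p θ)‖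
          = r * Complex.abs (hd (p θ)) := by
        rw [smul_eq_mul, norm_mul, norm_mul, norm_mul]
        simp only [Complex.norm_eq_abs, Complex.abs_ofReal, Complex.abs_exp_ofReal_mul_I,
          Complex.abs_I, abs_of_pos hr0, mul_one, one_mul]
      rw [this]
      calc r * Complex.abs (hd (p θ)) ≤ r * (C * r ^ (-(1+δ))) :=
            mul_le_mul_of_nonneg_left hb1 hr0.le
        _ = C * r ^ (-δ) := by
            have hrr : r ^ (-(1+δ)) * r = r ^ (-δ) := by
              rw [← Real.rpow_add_one hr0.ne' (-(1+δ))]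
              congr 1; ring
            rw [mul_comm r (C * r ^ (-(1+δ))), mul_assoc, hrr]
    have hftc : (∫ θ in (0:ℝ)..a, ((r:ℂ) * (Complex.exp (θ * Complex.I) * Complex.I)) • hd (p θ))
        = hfun (p a) - hfun (p 0) := by
      apply intervalIntegral.integral_eq_sub_of_hasDerivAt hcomp
      apply ContinuousOn.intervalIntegrable
      have hpc : Continuous p := by
        apply continuous_const.mul
        exact Complex.continuous_exp.comp (Complex.continuous_ofReal.mul continuous_const)
      apply ContinuousOn.fun_smul
      · apply Continuous.continuousOn
        exact continuous_const.mul ((Complex.continuous_exp.comp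
          (Complex.continuous_ofReal.mul continuous_const)).mul continuous_const)
      · apply hd_cont.comp hpc.continuousOn
        intro θ hθ
        exact (hp_mem θ (hmemuIcc θ hθ)).1
    have hpa : p a = v := by
      simp only [hp_def, hr_def, ha_def]
      exact Complex.abs_mul_exp_arg_mul_I v
    have hp0 : p 0 = (r:ℂ) := by simp [hp_def]
    have hnorm := intervalIntegral.norm_integral_le_of_norm_le_const
      (C := C * r ^ (-δ)) (f := fun θ : ℝ => ((r:ℂ) * (Complex.exp (θ * Complex.I) * Complex.I)) • hd (p θ))
      (a := 0) (b := a) (fun θ hθ => hbound θ (Set.uIoc_subset_uIcc hθ))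
    rw [hftc, hpa, hp0, Complex.norm_eq_abs] at hnorm
    have hrpos' : (0:ℝ) < r ^ (-δ) := Real.rpow_pos_of_pos hr0 _
    calc Complex.abs (hfun v - hfun (r:ℂ)) ≤ C * r ^ (-δ) * |a - 0| := hnorm
      _ ≤ C * Real.pi * r ^ (-δ) := by
          rw [sub_zero]
          have hπ : |a| ≤ Real.pi := by linarith [Real.pi_pos]
          calc C * r ^ (-δ) * |a| ≤ C * r ^ (-δ) * Real.pi := by
                apply mul_le_mul_of_nonneg_left hπ (by positivity)
            _ = C * Real.pi * r ^ (-δ) := by ring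
  -- limit of hfun along the filter
  have hFlim : Tendsto hfun (atInftyWithin rightHalfPlane) (𝓝 A₀) := by
    have t1 : Tendsto (fun v : ℂ => hfun ((Complex.abs v : ℝ):ℂ)) (atInftyWithin rightHalfPlane) (𝓝 A₀) :=
      key3.comp habs
    have t2 : Tendsto (fun v : ℂ => hfun v - hfun ((Complex.abs v : ℝ):ℂ))
        (atInftyWithin rightHalfPlane) (𝓝 0) := by
      apply squeeze_zero_norm' (a := fun v : ℂ => C * Real.pi * (Complex.abs v) ^ (-δ))
      · apply hmk R
        intro v hv hRv
        rw [Complex.norm_eq_abs]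
        exact harc v hv hRv
      · have h1 : Tendsto (fun x : ℝ => C * Real.pi * x ^ (-δ)) atTop (𝓝 (C * Real.pi * 0)) :=
          (tendsto_rpow_neg_atTop hδ0).const_mul (C * Real.pi)
        rw [mul_zero] at h1
        exact h1.comp habs
    have := t2.add t1
    rw [zero_add] at this
    apply this.congr
    intro v
    ring
  -- tendsto of φ to β along the filter
  have hφlim : Tendsto φ (atInftyWithin rightHalfPlane) (𝓝 β) := by
    have hz : Tendsto (fun v : ℂ => φ v - β) (atInftyWithin rightHalfPlane) (𝓝 0) := by
      apply squeeze_zero_norm' (a := fun v : ℂ => (g+1) * (Complex.abs v)⁻¹)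
      · apply hmk R
        intro v hv hRv
        rw [Complex.norm_eq_abs]
        have := (hreg v hv hRv).2.2
        rw [div_eq_mul_inv] at this
        exact this
      · have h1 : Tendsto (fun x : ℝ => (g+1) * x⁻¹) atTop (𝓝 ((g+1) * 0)) :=
          tendsto_inv_atTop_zero.const_mul (g+1)
        rw [mul_zero] at h1
        exact h1.comp habs
    have := hz.add (tendsto_const_nhds (x := β))
    rw [zero_add] at this
    apply this.congr
    intro v
    ring
  -- the constant
  have hβre : 0 ≤ β.re := by
    have hF1 : Tendsto (fun t : ℝ => Φ t 1) atTop (atInftyWithin rightHalfPlane) := by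
      rw [atInftyWithin]
      have h1mem : (1:ℂ) ∈ rightHalfPlane := by
        show (0:ℝ) < (1:ℂ).re; simp
      refine tendsto_inf.2 ⟨tendsto_comap_iff.2 ?_, tendsto_principal.2 ?_⟩
      · exact hdw 1 h1mem
      · filter_upwards [eventually_ge_atTop 0] with t ht using hsg.mapsTo t ht h1mem
    have h2 := (Complex.continuous_re.tendsto β).comp (hφlim.comp hF1)
    apply ge_of_tendsto h2
    filter_upwards [eventually_ge_atTop 0] with t ht
    have h1mem : (1:ℂ) ∈ rightHalfPlane := by
      show (0:ℝ) < (1:ℂ).re; simp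
    exact hsg.gen_re_nonneg _ (hsg.mapsTo t ht h1mem)
  have hβslit : β ∈ Complex.slitPlane := by
    rcases lt_or_eq_of_le hβre with h|h
    · exact Or.inl h
    · right
      intro him
      apply hβ
      apply Complex.ext
      · exact h.symm
      · exact him
  refine ⟨A₀ + (γ/β) * Complex.log β, ?_⟩
  intro w hw
  set F : ℝ → ℂ := fun t => Φ t w with hF_def
  have hFmem : ∀ t : ℝ, 0 ≤ t → F t ∈ rightHalfPlane := fun t ht => hsg.mapsTo t ht hw
  have hFtend : Tendsto F atTop (atInftyWithin rightHalfPlane) := by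
    rw [atInftyWithin]
    refine tendsto_inf.2 ⟨tendsto_comap_iff.2 ?_, tendsto_principal.2 ?_⟩
    · exact hdw w hw
    · filter_upwards [eventually_ge_atTop 0] with t ht using hFmem t ht
  -- Abel equation
  have habel : ∀ t : ℝ, 0 ≤ t → σ (F t) = σ w + t := by
    intro t ht
    rcases eq_or_lt_of_le ht with h|h
    · rw [← h]
      simp only [hF_def]
      rw [hsg.init w hw]
      simp
    · have hFc : ContinuousOn F (Icc 0 t) := by
        intro x hx
        exact ((hsg.ode w hw x hx.1).continuousWithinAt).mono (Icc_subset_Ici_self)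
      have hcont : ContinuousOn (fun s => σ (F s)) (Icc 0 t) := by
        apply hσc.comp hFc
        intro x hx
        exact hFmem x hx.1
      have hder : ∀ x ∈ Ioo 0 t, HasDerivWithinAt (fun s => σ (F s)) 1 (Ioi x) x := by
        intro x hx
        have hFx : HasDerivAt F (φ (F x)) x :=
          (hsg.ode w hw x hx.1.le).hasDerivAt (Ici_mem_nhds hx.1)
        have hc := HasDerivAt.scomp x (hσd (F x) (hFmem x hx.1.le)) hFx
        have heq : (φ (F x)) • (1 / φ (F x)) = 1 := by
          rw [smul_eq_mul, mul_one_div, div_self (hnz _ (hFmem x hx.1.le))]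
        rw [heq] at hc
        exact hc.hasDerivWithinAt
      have hint1 : IntervalIntegrable (fun _ : ℝ => (1:ℂ)) volume 0 t :=
        intervalIntegrable_const
      have := intervalIntegral.integral_eq_sub_of_hasDeriv_right_of_le h.le hcont hder hint1
      rw [intervalIntegral.integral_const] at this
      simp only [sub_zero, Complex.real_smul, mul_one] at this
      have hF0 : F 0 = w := hsg.init w hw
      rw [hF0] at this
      linear_combination -this
  -- F t / (t+1) tends to β
  have hφF : Tendsto (fun t : ℝ => φ (F t)) atTop (𝓝 β) := hφlim.comp hFtend
  have hu : Tendsto (fun t : ℝ => ‖F t - β * (t:ℂ)‖ / (t+1)) atTop (𝓝 0) := by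
    rw [Metric.tendsto_atTop]
    intro e he
    obtain ⟨S₀, hS₀⟩ := (Metric.tendsto_atTop.1 hφF (e/2) (by linarith))
    set S : ℝ := max S₀ 0 with hS_def
    have hS0 : (0:ℝ) ≤ S := le_max_right _ _
    set f : ℝ → ℂ := fun x => F x - β * (x:ℂ) with hf_def
    have hfd : ∀ x ∈ Ici S, HasDerivWithinAt f (φ (F x) - β) (Ici S) x := by
      intro x hx
      have hx0 : (0:ℝ) ≤ x := le_trans hS0 hx
      have h1 : HasDerivWithinAt F (φ (F x)) (Ici S) x :=
        (hsg.ode w hw x hx0).mono (Ici_subset_Ici.2 (le_trans (le_max_right _ _) (le_refl S)))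
      have h2 : HasDerivAt (fun x : ℝ => β * (x:ℂ)) β x := by
        have := ((hasDerivAt_id x).ofReal_comp (z := x)).const_mul β
        simpa using this
      exact h1.sub h2.hasDerivWithinAt
    have hfb : ∀ x ∈ Ici S, ‖φ (F x) - β‖ ≤ e/2 := by
      intro x hx
      have := hS₀ x (le_trans (le_max_left _ _) hx)
      rw [dist_eq_norm] at this
      exact this.le
    have hmv : ∀ t : ℝ, S ≤ t → ‖f t - f S‖ ≤ e/2 * (t - S) := by
      intro t ht
      have := Convex.norm_image_sub_le_of_norm_hasDerivWithin_le hfd hfb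
        (convex_Ici S) (self_mem_Ici) ht
      rw [Real.norm_eq_abs, _root_.abs_of_nonneg (by linarith : (0:ℝ) ≤ t - S)] at this
      exact this
    set K : ℝ := ‖f S‖ with hK_def
    have hK0 : 0 ≤ K := norm_nonneg _
    refine ⟨max S (2*K/e + 1), ?_⟩
    intro t ht
    have htS : S ≤ t := le_trans (le_max_left _ _) ht
    have htK : 2*K/e + 1 ≤ t := le_trans (le_max_right _ _) ht
    have ht1 : (0:ℝ) < t + 1 := by
      have : (0:ℝ) ≤ t := le_trans hS0 htS
      linarith
    have hft : ‖f t‖ ≤ K + e/2 * (t - S) := by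
      have h1 := hmv t htS
      have h2 := norm_sub_norm_le (f t) (f S)
      rw [hK_def]
      linarith [h2, h1]
    rw [Real.dist_eq, sub_zero, _root_.abs_of_nonneg (by positivity : (0:ℝ) ≤ ‖F t - β * (t:ℂ)‖/(t+1))]
    have hfeq : ‖F t - β * (t:ℂ)‖ = ‖f t‖ := rfl
    rw [hfeq, div_lt_iff₀ ht1]
    have h3 : e * (t+1) ≥ e * (2*K/e + 2) := by
      apply mul_le_mul_of_nonneg_left _ he.le
      linarith
    have h4 : e * (2*K/e + 2) = 2*K + 2*e := by
      field_simp
    have h6 : e * (t+1) ≥ 2*K + 2*e := by linarith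
    have hts : t - S ≤ t + 1 := by linarith
    have h7 : e/2 * (t - S) ≤ e/2 * (t+1) := by
      apply mul_le_mul_of_nonneg_left hts (by linarith)
    calc ‖f t‖ ≤ K + e/2 * (t - S) := hft
      _ < e * (t+1) := by nlinarith
  have hmain : Tendsto (fun t : ℝ => (F t + 1) / ((t:ℂ) + 1)) atTop (𝓝 β) := by
    have htc : ∀ t : ℝ, 0 ≤ t → ((t:ℂ) + 1) ≠ 0 := by
      intro t ht h
      have : ((t:ℂ)+1).re = 0 := by rw [h]; simp
      simp only [Complex.add_re, Complex.ofReal_re, Complex.one_re] at this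
      linarith
    have hz : Tendsto (fun t : ℝ => (F t + 1) / ((t:ℂ) + 1) - β) atTop (𝓝 0) := by
      apply squeeze_zero_norm'
        (a := fun t : ℝ => ‖F t - β * (t:ℂ)‖ / (t+1) + ‖(1:ℂ) - β‖ / (t+1))
      · filter_upwards [eventually_ge_atTop 0] with t ht
        have ht1 : (0:ℝ) < t + 1 := by linarith
        have heq : (F t + 1) / ((t:ℂ) + 1) - β = (F t - β * (t:ℂ) + ((1:ℂ) - β)) / ((t:ℂ)+1) := by
          field_simp [htc t ht]
          ring
        rw [heq]
        rw [norm_div]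
        have habs1 : ‖(t:ℂ) + 1‖ = t + 1 := by
          rw [show ((t:ℂ) + 1) = ((t + 1 : ℝ) : ℂ) by push_cast; ring]
          rw [Complex.norm_eq_abs, Complex.abs_ofReal, _root_.abs_of_nonneg (by linarith : (0:ℝ) ≤ t+1)]
        rw [habs1, ← add_div]
        apply (div_le_div_iff_of_pos_right ht1).2
        exact norm_add_le _ _
      · have h2 : Tendsto (fun t : ℝ => ‖(1:ℂ) - β‖ / (t+1)) atTop (𝓝 0) := by
          have h3 : Tendsto (fun t : ℝ => t + 1) atTop atTop :=
            tendsto_atTop_add_const_right _ 1 tendsto_id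
          have h4 := h3.inv_tendsto_atTop
          have h5 := h4.const_mul ‖(1:ℂ) - β‖
          rw [mul_zero] at h5
          apply h5.congr
          intro t
          simp [Pi.inv_apply, div_eq_mul_inv]
        have := hu.add h2
        rw [add_zero] at this
        exact this
    have := hz.add (tendsto_const_nhds (x := β))
    rw [zero_add] at this
    apply this.congr
    intro t
    ring
  -- assembly
  have hhF : Tendsto (fun t : ℝ => hfun (F t)) atTop (𝓝 A₀) := hFlim.comp hFtend
  have hlogβ : Tendsto (fun t : ℝ => Complex.log ((F t + 1)/((t:ℂ)+1))) atTop
      (𝓝 (Complex.log β)) := hmain.clog hβslit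
  have hsum := hhF.add (hlogβ.const_mul (γ/β))
  apply hsum.congr'
  filter_upwards [eventually_ge_atTop 0] with t ht
  have hFt : F t ∈ rightHalfPlane := hFmem t ht
  have hFt' : 0 < (F t).re := hFt
  have ht1 : (0:ℝ) < t + 1 := by linarith
  have hz1 : F t + 1 ≠ 0 := by
    intro h
    have : (F t + 1).re = 0 := by rw [h]; simp
    simp only [Complex.add_re, Complex.one_re] at this
    linarith
  have htc : ((t:ℂ) + 1) ≠ 0 := by
    intro h
    have : ((t:ℂ)+1).re = 0 := by rw [h]; simp
    simp only [Complex.add_re, Complex.ofReal_re, Complex.one_re] at this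
    linarith
  have hne : (F t + 1)/((t:ℂ)+1) ≠ 0 := div_ne_zero hz1 htc
  have hlogid : Complex.log ((F t + 1)/((t:ℂ)+1))
      = Complex.log (F t + 1) - (Real.log (t+1) : ℂ) := by
    have h1 := Complex.log_ofReal_mul (r := t+1) ht1 (x := (F t + 1)/((t:ℂ)+1)) hne
    have h2 : ((t+1:ℝ):ℂ) * ((F t + 1)/((t:ℂ)+1)) = F t + 1 := by
      push_cast
      field_simp
    rw [h2] at h1
    rw [h1]
    ring
  have habelt : σ (F t) = σ w + (t:ℂ) := habel t ht
  show hfun (F t) + (γ/β) * Complex.log ((F t + 1)/((t:ℂ)+1))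
      = Φ t w - β * (t:ℂ) - (γ/β) * (Real.log (t+1) : ℂ) - β * σ w
  rw [hlogid]
  simp only [hh_def]
  rw [habelt]
  show F t - β * (σ w + (t:ℂ)) - γ / β * Complex.log (F t + 1)
      + γ / β * (Complex.log (F t + 1) - (Real.log (t+1) : ℂ))
      = Φ t w - β * (t:ℂ) - (γ/β) * (Real.log (t+1) : ℂ) - β * σ w
  have : F t = Φ t w := rfl
  rw [this]
  ring
end
end

section
/- Let (Φ_t)_{t≥0} be a continuous one-parameter semigroup on the right half-plane Π with Denjoy–Wolff point at ∞, generated by −φ, where φ admits the representation φ(w) = β + γ/(w+1) + ϱ₁(w) with β, γ ∈ ℂ, β ≠ 0, and w^{1+ε}·ϱ₁(w) → 0 as |w| → ∞, w ∈ Π, for some ε > 0. If Im(γ/β²) ≠ 0, then for every w ∈ Π, |Im( Φ_t(w)·conj(β) )| → ∞ as t → ∞; in particular, no trajectory {Φ_t(w) : t ≥ 0} has an asymptote. -/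
open Complex Filter Topology Set MeasureTheory

noncomputable section

lemma abs_le_abs_add_one {x : ℂ} (hx : x ∈ rightHalfPlane) : ‖x‖ ≤ ‖x + 1‖ := by
  have hx' : 0 < x.re := hx
  have h2 : Complex.normSq x ≤ Complex.normSq (x + 1) := by
    simp only [Complex.normSq_apply, Complex.add_re, Complex.add_im, Complex.one_re,
      Complex.one_im]
    nlinarith
  simpa only [Complex.norm_def] using Real.sqrt_le_sqrt h2

lemma log_le_two_sqrt {s : ℝ} (hs : 1 ≤ s) : Real.log s ≤ 2 * s ^ ((1:ℝ)/2) := by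
  have hs0 : 0 < s := lt_of_lt_of_le one_pos hs
  have h1 : Real.log (s ^ ((1:ℝ)/2)) = (1/2) * Real.log s := Real.log_rpow hs0 _
  have h2 : Real.log (s ^ ((1:ℝ)/2)) ≤ s ^ ((1:ℝ)/2) - 1 :=
    Real.log_le_sub_one_of_pos (Real.rpow_pos_of_pos hs0 _)
  nlinarith [Real.rpow_pos_of_pos hs0 ((1:ℝ)/2)]

lemma phi_bounds (φ : ℂ → ℂ) (β γ : ℂ) (ε : ℝ) (hε : 0 < ε)
    (hrep : Filter.Tendsto (fun w : ℂ => w ^ ((1 + ε : ℝ) : ℂ) * (φ w - β - γ / (w + 1)))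
      (atInftyWithin rightHalfPlane) (nhds 0)) :
    ∃ R : ℝ, 1 ≤ R ∧ ∀ x ∈ rightHalfPlane, R ≤ ‖x‖ →
      ‖φ x - β - γ / (x + 1)‖ ≤ (‖x‖) ^ (-(1 + ε))
      ∧ ‖φ x - β‖ ≤ (‖γ‖ + 1) / ‖x‖ := by
  have hev : ∀ᶠ x in atInftyWithin rightHalfPlane,
      ‖x ^ ((1 + ε : ℝ) : ℂ) * (φ x - β - γ / (x + 1))‖ < 1 := by
    have := Metric.tendsto_nhds.mp hrep 1 one_pos
    simpa [dist_zero_right] using this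
  rw [atInftyWithin, eventually_inf_principal, eventually_comap, eventually_atTop] at hev
  obtain ⟨R0, hR0⟩ := hev
  refine ⟨max R0 1, le_max_right _ _, fun x hx hRx => ?_⟩
  have hx1 : (1:ℝ) ≤ ‖x‖ := le_trans (le_max_right _ _) hRx
  have hx0 : (0:ℝ) < ‖x‖ := lt_of_lt_of_le one_pos hx1
  have h1 := hR0 (‖x‖) (le_trans (le_max_left _ _) hRx) x rfl hx
  rw [norm_mul, Complex.norm_cpow_real] at h1
  have hpow : (0:ℝ) < ‖x‖ ^ (1 + ε) := Real.rpow_pos_of_pos hx0 _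
  have hρ : ‖φ x - β - γ / (x + 1)‖ ≤ (‖x‖) ^ (-(1 + ε)) := by
    rw [Real.rpow_neg (le_of_lt hx0), ← one_div, le_div_iff₀ hpow, mul_comm]
    exact le_of_lt h1
  refine ⟨hρ, ?_⟩
  have habs1 : ‖x‖ ≤ ‖x + 1‖ := abs_le_abs_add_one hx
  have h2 : ‖γ / (x + 1)‖ ≤ ‖γ‖ / ‖x‖ := by
    rw [norm_div]
    gcongr
  have h3 : (‖x‖) ^ (-(1 + ε)) ≤ 1 / ‖x‖ := by
    rw [one_div, ← Real.rpow_neg_one (‖x‖)]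
    exact Real.rpow_le_rpow_of_exponent_le hx1 (by linarith)
  calc ‖φ x - β‖
      = ‖(φ x - β - γ / (x + 1)) + γ / (x + 1)‖ := by ring_nf
    _ ≤ ‖φ x - β - γ / (x + 1)‖ + ‖γ / (x + 1)‖ := norm_add_le _ _
    _ ≤ 1 / ‖x‖ + ‖γ‖ / ‖x‖ := add_le_add (le_trans hρ h3) h2
    _ = (‖γ‖ + 1) / ‖x‖ := by ring

set_option maxHeartbeats 1000000 in
lemma core (u : ℝ → ℂ) (φ : ℂ → ℂ) (β γ : ℂ) (ε : ℝ) (hβ : β ≠ 0) (hε : 0 < ε)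
    (hmem : ∀ t, 0 ≤ t → u t ∈ rightHalfPlane)
    (hucont : ContinuousOn u (Ici 0))
    (hφucont : ContinuousOn (fun s => φ (u s)) (Ici 0))
    (hd : ∀ t, 0 ≤ t → HasDerivWithinAt u (φ (u t)) (Ici 0) t)
    (habs : Filter.Tendsto (fun t => ‖u t‖) atTop atTop)
    (R : ℝ) (hR1 : 1 ≤ R)
    (hbound : ∀ x ∈ rightHalfPlane, R ≤ ‖x‖ →
      ‖φ x - β - γ / (x + 1)‖ ≤ (‖x‖) ^ (-(1 + ε))
      ∧ ‖φ x - β‖ ≤ (‖γ‖ + 1) / ‖x‖)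
    (hγβ : (γ / β ^ 2).im ≠ 0) :
    Filter.Tendsto (fun t : ℝ => |(u t * (starRingEnd ℂ) β).im|) atTop atTop := by
  set b := ‖β‖ with hbdef
  have hb : 0 < b := norm_pos_iff.mpr hβ
  -- FTC
  have hFTCβ : ∀ a t : ℝ, 0 ≤ a → a ≤ t →
      (∫ s in a..t, (φ (u s) - β)) = (u t - u a) - ((t:ℂ) - (a:ℂ)) * β := by
    intro a t ha hat
    have hint : IntervalIntegrable (fun s => φ (u s)) volume a t :=
      (hφucont.mono (by rw [uIcc_of_le hat]; exact fun x hx => le_trans ha hx.1)).intervalIntegrable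
    have hFTC : (∫ s in a..t, φ (u s)) = u t - u a := by
      apply intervalIntegral.integral_eq_sub_of_hasDeriv_right_of_le hat
      · exact hucont.mono (fun x hx => le_trans ha hx.1)
      · intro x hx
        exact (hd x (le_trans ha (le_of_lt hx.1))).mono
          (fun y hy => le_of_lt (lt_of_le_of_lt (le_trans ha (le_of_lt hx.1)) hy))
      · exact hint
    rw [intervalIntegral.integral_sub hint intervalIntegrable_const, hFTC,
      intervalIntegral.integral_const]
    rw [Complex.real_smul]
    push_cast
    ring
  -- Step B : eventual lower bound |u t| ≥ (b/2) t
  obtain ⟨T0, hT0⟩ := eventually_atTop.mp (habs.eventually_ge_atTop (max R ((‖γ‖ + 1)/(b/4))))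
  set T : ℝ := max T0 1 with hTdef
  have hT1 : (1:ℝ) ≤ T := le_max_right _ _
  have hTpos : (0:ℝ) < T := lt_of_lt_of_le one_pos hT1
  have huR : ∀ s, T ≤ s → R ≤ ‖u s‖ := fun s hs =>
    le_trans (le_max_left _ _) (hT0 s (le_trans (le_max_left _ _) hs))
  have humem : ∀ s, T ≤ s → u s ∈ rightHalfPlane := fun s hs => hmem s (le_trans hTpos.le hs)
  have hupos : ∀ s, T ≤ s → 0 < ‖u s‖ := fun s hs =>
    lt_of_lt_of_le (lt_of_lt_of_le one_pos hR1) (huR s hs)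
  have hphiu : ∀ s, T ≤ s → ‖φ (u s) - β‖ ≤ b / 4 := by
    intro s hs
    have h1 := (hbound (u s) (humem s hs) (huR s hs)).2
    have h2 : (‖γ‖ + 1)/(b/4) ≤ ‖u s‖ :=
      le_trans (le_max_right _ _) (hT0 s (le_trans (le_max_left _ _) hs))
    refine le_trans h1 ?_
    rw [div_le_iff₀ (hupos s hs)]
    calc ‖γ‖ + 1 = (b/4) * ((‖γ‖ + 1)/(b/4)) := by field_simp
      _ ≤ (b/4) * ‖u s‖ := by
          apply mul_le_mul_of_nonneg_left h2 (by linarith)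
  set K : ℝ := ‖u T - (T:ℂ) * β‖ with hKdef
  have hK0 : 0 ≤ K := norm_nonneg _
  have hlin : ∀ t, T ≤ t → ‖u t - (t:ℂ) * β‖ ≤ K + (b/4) * t := by
    intro t ht
    have hint := hFTCβ T t hTpos.le ht
    have hnorm : ‖∫ s in T..t, (φ (u s) - β)‖ ≤ (b/4) * |t - T| := by
      apply intervalIntegral.norm_integral_le_of_norm_le_const
      intro x hx
      rw [uIoc_of_le ht] at hx
      exact hphiu x (le_of_lt hx.1)
    rw [hint] at hnorm
    have habs' : |t - T| = t - T := abs_of_nonneg (by linarith)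
    rw [habs'] at hnorm
    calc ‖u t - (t:ℂ) * β‖
        = ‖((u t - u T) - ((t:ℂ) - (T:ℂ)) * β) + (u T - (T:ℂ) * β)‖ := by ring_nf
      _ ≤ ‖(u t - u T) - ((t:ℂ) - (T:ℂ)) * β‖ + K := norm_add_le _ _
      _ ≤ (b/4) * (t - T) + K := by linarith
      _ ≤ K + (b/4) * t := by nlinarith
  set T₂ : ℝ := max T (4*K/b + 1) with hT₂def
  have hTT₂ : T ≤ T₂ := le_max_left _ _
  have hT₂1 : (1:ℝ) ≤ T₂ := le_trans hT1 hTT₂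
  have hT₂pos : (0:ℝ) < T₂ := lt_of_lt_of_le one_pos hT₂1
  have hlow : ∀ t, T₂ ≤ t → (b/2) * t ≤ ‖u t‖ := by
    intro t ht
    have hTt : T ≤ t := le_trans hTT₂ ht
    have h1 := hlin t hTt
    have h2 : 4*K/b + 1 ≤ t := le_trans (le_max_right _ _) ht
    have h3 : ‖(t:ℂ) * β‖ ≤ ‖u t‖ + ‖u t - (t:ℂ) * β‖ := by
      calc ‖(t:ℂ) * β‖ = ‖u t + ((t:ℂ)*β - u t)‖ := by ring_nf
        _ ≤ ‖u t‖ + ‖(t:ℂ)*β - u t‖ := norm_add_le _ _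
        _ = ‖u t‖ + ‖u t - (t:ℂ)*β‖ := by rw [norm_sub_rev]
    have h4 : ‖(t:ℂ) * β‖ = t * b := by
      rw [norm_mul, Complex.norm_real, Real.norm_eq_abs, abs_of_pos (lt_of_lt_of_le hT₂pos ht)]
    have hKt : K ≤ (b/4) * t := by
      have ht0 : 0 < t := lt_of_lt_of_le hT₂pos ht
      have h4K : 4*K/b * b = 4*K := by field_simp
      nlinarith
    nlinarith
  -- Step C : logarithmic bound
  set Cγ : ℝ := ‖γ‖ + 1 with hCγdef
  have hCγ0 : 0 < Cγ := by positivity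
  set C₃ : ℝ := Cγ * (2/b) with hC₃def
  have hC₃0 : 0 < C₃ := by positivity
  set K₂ : ℝ := ‖u T₂ - (T₂:ℂ) * β‖ with hK₂def
  have hK₂0 : 0 ≤ K₂ := norm_nonneg _
  have hlog : ∀ t, T₂ ≤ t → ‖u t - (t:ℂ) * β‖ ≤ K₂ + C₃ * Real.log t := by
    intro t ht
    have hT₂t : T₂ ≤ t := ht
    have hint := hFTCβ T₂ t hT₂pos.le ht
    have hgint : IntervalIntegrable (fun s => C₃ * (1/s)) volume T₂ t := by
      apply ContinuousOn.intervalIntegrable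
      apply continuousOn_const.mul
      apply continuousOn_const.div continuousOn_id
      intro x hx
      rw [uIcc_of_le ht] at hx
      exact ne_of_gt (lt_of_lt_of_le hT₂pos hx.1)
    have hnorm : ‖∫ s in T₂..t, (φ (u s) - β)‖ ≤ |∫ s in T₂..t, C₃ * (1/s)| := by
      apply intervalIntegral.norm_integral_le_abs_of_norm_le _ hgint
      apply (ae_restrict_iff' measurableSet_uIoc).2
      apply Filter.Eventually.of_forall
      intro s hs
      rw [uIoc_of_le ht] at hs
      have hsT₂ : T₂ ≤ s := hs.1.le
      have hsT : T ≤ s := le_trans hTT₂ hsT₂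
      have hspos : 0 < s := lt_of_lt_of_le hT₂pos hsT₂
      have h1 := (hbound (u s) (humem s hsT) (huR s hsT)).2
      refine le_trans h1 ?_
      have h2 : (b/2) * s ≤ ‖u s‖ := hlow s hsT₂
      calc Cγ / ‖u s‖ ≤ Cγ / ((b/2)*s) := by
            apply div_le_div_of_nonneg_left hCγ0.le (by positivity) h2
        _ = C₃ * (1/s) := by rw [hC₃def]; field_simp
    have hval : (∫ s in T₂..t, C₃ * (1/s)) = C₃ * (Real.log t - Real.log T₂) := by
      rw [intervalIntegral.integral_const_mul, integral_one_div]
      · rw [Real.log_div (ne_of_gt (lt_of_lt_of_le hT₂pos ht)) (ne_of_gt hT₂pos)]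
      · rw [uIcc_of_le ht]
        intro hx
        exact absurd hx.1 (not_le.mpr hT₂pos)
    have hlogT₂ : 0 ≤ Real.log T₂ := Real.log_nonneg hT₂1
    have hlogmono : Real.log T₂ ≤ Real.log t := Real.log_le_log hT₂pos ht
    rw [hint, hval] at hnorm
    have habs2 : |C₃ * (Real.log t - Real.log T₂)| = C₃ * (Real.log t - Real.log T₂) := by
      apply _root_.abs_of_nonneg; nlinarith
    rw [habs2] at hnorm
    calc ‖u t - (t:ℂ) * β‖
        = ‖((u t - u T₂) - ((t:ℂ) - (T₂:ℂ)) * β) + (u T₂ - (T₂:ℂ) * β)‖ := by ring_nf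
      _ ≤ ‖(u t - u T₂) - ((t:ℂ) - (T₂:ℂ)) * β‖ + K₂ := norm_add_le _ _
      _ ≤ C₃ * (Real.log t - Real.log T₂) + K₂ := by linarith
      _ ≤ K₂ + C₃ * Real.log t := by nlinarith
  -- Step D : constant c and pointwise error bound
  set c : ℝ := (γ * (starRingEnd ℂ) β / β).im with hcdef
  have hc : c ≠ 0 := by
    have hid : γ * (starRingEnd ℂ) β / β = γ / β^2 * ((Complex.normSq β : ℝ) : ℂ) := by
      rw [← Complex.mul_conj]
      field_simp
    rw [hcdef, hid]
    simp only [Complex.mul_im, Complex.ofReal_re, Complex.ofReal_im, mul_zero, add_zero, zero_add]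
    exact mul_ne_zero hγβ (ne_of_gt (Complex.normSq_pos.mpr hβ))
  set δ' : ℝ := min ε (1/2) with hδdef
  have hδ0 : 0 < δ' := lt_min hε (by norm_num)
  have hδε : δ' ≤ ε := min_le_left _ _
  have hδhalf : δ' ≤ 1/2 := min_le_right _ _
  set M₁ : ℝ := ‖γ‖ * b * (2/b^2) * (K₂ + 1 + 2*C₃) with hM₁def
  set M₂ : ℝ := b * (b/2) ^ (-(1+ε)) with hM₂def
  set M : ℝ := M₁ + M₂ with hMdef
  have hM₁0 : 0 ≤ M₁ := by positivity
  have hM₂0 : 0 ≤ M₂ := by positivity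
  have hE : ∀ s, T₂ ≤ s →
      |((φ (u s)) * (starRingEnd ℂ) β).im - c / s| ≤ M * s ^ (-(1+δ')) := by
    intro s hs
    have hsT : T ≤ s := le_trans hTT₂ hs
    have hs1 : (1:ℝ) ≤ s := le_trans hT₂1 hs
    have hs0 : (0:ℝ) < s := lt_of_lt_of_le one_pos hs1
    set x := u s with hxdef
    have hx_mem : x ∈ rightHalfPlane := humem s hsT
    have hxR : R ≤ ‖x‖ := huR s hsT
    have hxpos : 0 < ‖x‖ := hupos s hsT
    have hxlow : (b/2)*s ≤ ‖x‖ := hlow s hs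
    have hx1 : ‖x‖ ≤ ‖x+1‖ := abs_le_abs_add_one hx_mem
    have hx1pos : 0 < ‖x+1‖ := lt_of_lt_of_le hxpos hx1
    have hx1ne : x + 1 ≠ 0 := by
      intro h; rw [h] at hx1pos; simp at hx1pos
    have hsC : ((s:ℝ):ℂ) ≠ 0 := Complex.ofReal_ne_zero.mpr (ne_of_gt hs0)
    have hβs : (β * (s:ℂ)) ≠ 0 := mul_ne_zero hβ hsC
    -- decompose the imaginary part
    have him0 : (β * (starRingEnd ℂ) β).im = 0 := by
      rw [Complex.mul_conj]; exact Complex.ofReal_im _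
    have hsplit : (φ x * (starRingEnd ℂ) β).im
        = ((γ/(x+1)) * (starRingEnd ℂ) β).im + ((φ x - β - γ/(x+1)) * (starRingEnd ℂ) β).im := by
      have hring : φ x * (starRingEnd ℂ) β = β * (starRingEnd ℂ) β
          + ((γ/(x+1)) * (starRingEnd ℂ) β + (φ x - β - γ/(x+1)) * (starRingEnd ℂ) β) := by ring
      rw [hring, Complex.add_im, him0, zero_add, Complex.add_im]
    have hcs : c / s = ((γ * (starRingEnd ℂ) β) / (β * (s:ℂ))).im := by
      rw [← div_div, Complex.div_ofReal_im]
    set D : ℂ := (γ/(x+1)) * (starRingEnd ℂ) β - (γ * (starRingEnd ℂ) β) / (β * (s:ℂ)) with hDdef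
    have hedecomp : (φ x * (starRingEnd ℂ) β).im - c / s
        = D.im + ((φ x - β - γ/(x+1)) * (starRingEnd ℂ) β).im := by
      rw [hsplit, hcs, hDdef, Complex.sub_im]; ring
    have htri : |(φ x * (starRingEnd ℂ) β).im - c / s|
        ≤ ‖D‖ + ‖(φ x - β - γ/(x+1)) * (starRingEnd ℂ) β‖ := by
      rw [hedecomp]
      refine le_trans (abs_add_le _ _) (add_le_add (Complex.abs_im_le_norm D) (Complex.abs_im_le_norm _))
    -- term 2 (the ρ term)
    have hρ := (hbound x hx_mem hxR).1
    have hterm2 : ‖(φ x - β - γ/(x+1)) * (starRingEnd ℂ) β‖ ≤ M₂ * s ^ (-(1+δ')) := by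
      rw [norm_mul, Complex.norm_conj]
      have h2a : ‖x‖ ^ (-(1+ε)) ≤ ((b/2)*s) ^ (-(1+ε)) := by
        rw [Real.rpow_neg hxpos.le, Real.rpow_neg (by positivity)]
        apply inv_anti₀ (Real.rpow_pos_of_pos (by positivity) _)
        exact Real.rpow_le_rpow (by positivity) hxlow (by linarith)
      have h2b : ((b/2)*s) ^ (-(1+ε)) = (b/2)^(-(1+ε)) * s^(-(1+ε)) :=
        Real.mul_rpow (by positivity) hs0.le
      have h2c : s^(-(1+ε)) ≤ s^(-(1+δ')) :=
        Real.rpow_le_rpow_of_exponent_le hs1 (by linarith)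
      calc ‖φ x - β - γ/(x+1)‖ * b ≤ ((b/2)*s) ^ (-(1+ε)) * b := by
            apply mul_le_mul_of_nonneg_right (le_trans hρ h2a) hb.le
        _ = b * (b/2)^(-(1+ε)) * s^(-(1+ε)) := by rw [h2b]; ring
        _ ≤ M₂ * s ^ (-(1+δ')) := by
            rw [hM₂def]
            have : 0 ≤ b * (b/2)^(-(1+ε)) := by positivity
            calc b * (b/2)^(-(1+ε)) * s^(-(1+ε)) ≤ b * (b/2)^(-(1+ε)) * s^(-(1+δ')) :=
                  mul_le_mul_of_nonneg_left h2c this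
              _ = b * (b/2) ^ (-(1+ε)) * s ^ (-(1+δ')) := rfl
    -- term 1 (the main comparison term)
    have habsβs : ‖β * (s:ℂ)‖ = b * s := by
      rw [norm_mul, Complex.norm_real, Real.norm_eq_abs, _root_.abs_of_pos hs0]
    have hnum : ‖β * (s:ℂ) - (x+1)‖ ≤ (K₂ + 1 + 2*C₃) * s ^ ((1:ℝ)/2) := by
      have hneg : β * (s:ℂ) - (x+1) = -((x - (s:ℂ)*β) + 1) := by ring
      have h1 : ‖β * (s:ℂ) - (x+1)‖ ≤ ‖x - (s:ℂ)*β‖ + 1 := by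
        rw [hneg, norm_neg]
        calc ‖(x - (s:ℂ)*β) + 1‖ ≤ ‖x - (s:ℂ)*β‖ + ‖1‖ :=
              norm_add_le _ _
          _ = ‖x - (s:ℂ)*β‖ + 1 := by rw [norm_one]
      have h2 : ‖x - (s:ℂ)*β‖ ≤ K₂ + C₃ * Real.log s := hlog s hs
      have hsq1 : (1:ℝ) ≤ s^((1:ℝ)/2) := by
        have := Real.rpow_le_rpow (by norm_num : (0:ℝ) ≤ 1) hs1 (by norm_num : (0:ℝ) ≤ 1/2)
        rwa [Real.one_rpow] at this
      have hlogs := log_le_two_sqrt hs1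
      have e1 : C₃ * Real.log s ≤ C₃ * (2 * s^((1:ℝ)/2)) := mul_le_mul_of_nonneg_left hlogs hC₃0.le
      have e2 : K₂ * 1 ≤ K₂ * s^((1:ℝ)/2) := mul_le_mul_of_nonneg_left hsq1 hK₂0
      calc ‖β * (s:ℂ) - (x+1)‖ ≤ K₂ + C₃ * Real.log s + 1 := by linarith
        _ ≤ (K₂ + 1 + 2*C₃) * s ^ ((1:ℝ)/2) := by ring_nf; ring_nf at e1 e2; linarith
    have hden : ((b/2)*s) * (b*s) ≤ ‖x+1‖ * ‖β * (s:ℂ)‖ := by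
      rw [habsβs]
      exact mul_le_mul (le_trans hxlow hx1) le_rfl (mul_nonneg hb.le hs0.le) hx1pos.le
    have hDform : D = γ * (starRingEnd ℂ) β * ((β * (s:ℂ) - (x+1))/((x+1)*(β * (s:ℂ)))) := by
      rw [hDdef]
      field_simp
    have hs32 : s^((1:ℝ)/2) / s^(2:ℕ) ≤ s^(-(1+δ')) := by
      rw [← Real.rpow_natCast s 2, ← Real.rpow_sub hs0]
      apply Real.rpow_le_rpow_of_exponent_le hs1
      push_cast
      linarith
    have habsD : ‖D‖ ≤ M₁ * s^(-(1+δ')) := by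
      rw [hDform, norm_mul, norm_mul, Complex.norm_conj, norm_div, norm_mul]
      have hfrac : ‖β * (s:ℂ) - (x+1)‖ / (‖x+1‖ * ‖β * (s:ℂ)‖)
          ≤ ((K₂ + 1 + 2*C₃) * s ^ ((1:ℝ)/2)) / (((b/2)*s) * (b*s)) :=
        div_le_div₀ (by positivity) hnum (by positivity) hden
      calc ‖γ‖ * b * (‖β * (s:ℂ) - (x+1)‖ / (‖x+1‖ * ‖β * (s:ℂ)‖))
          ≤ ‖γ‖ * b * (((K₂ + 1 + 2*C₃) * s ^ ((1:ℝ)/2)) / (((b/2)*s) * (b*s))) :=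
            mul_le_mul_of_nonneg_left hfrac (by positivity)
        _ = M₁ * (s^((1:ℝ)/2) / s^(2:ℕ)) := by
            rw [hM₁def]
            field_simp
        _ ≤ M₁ * s^(-(1+δ')) := mul_le_mul_of_nonneg_left hs32 hM₁0
    calc |(φ x * (starRingEnd ℂ) β).im - c / s|
        ≤ ‖D‖ + ‖(φ x - β - γ/(x+1)) * (starRingEnd ℂ) β‖ := htri
      _ ≤ M₁ * s^(-(1+δ')) + M₂ * s^(-(1+δ')) := add_le_add habsD hterm2
      _ = M * s ^ (-(1+δ')) := by rw [hMdef]; ring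
  -- Step E : integrate the derivative of the imaginary part
  set f : ℝ → ℝ := fun t => (u t * (starRingEnd ℂ) β).im with hfdef
  have hgc : ContinuousOn (fun s => ((φ (u s)) * (starRingEnd ℂ) β).im) (Ici 0) :=
    Complex.continuous_im.comp_continuousOn (hφucont.mul continuousOn_const)
  have hfc : ContinuousOn f (Ici 0) :=
    Complex.continuous_im.comp_continuousOn (hucont.mul continuousOn_const)
  have hfd : ∀ t, 0 ≤ t → HasDerivWithinAt f ((φ (u t) * (starRingEnd ℂ) β).im) (Ici 0) t := by
    intro t ht
    have h1 := (hd t ht).mul_const ((starRingEnd ℂ) β)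
    exact (Complex.imCLM.hasFDerivAt.comp_hasDerivWithinAt t h1)
  have hfFTC : ∀ t, T₂ ≤ t →
      (∫ s in T₂..t, ((φ (u s)) * (starRingEnd ℂ) β).im) = f t - f T₂ := by
    intro t ht
    apply intervalIntegral.integral_eq_sub_of_hasDeriv_right_of_le ht
    · exact hfc.mono (fun y hy => le_trans hT₂pos.le hy.1)
    · intro y hy
      exact (hfd y (le_trans hT₂pos.le hy.1.le)).mono
        (fun z hz => le_of_lt (lt_of_le_of_lt (le_trans hT₂pos.le hy.1.le) hz))
    · exact (hgc.mono (by rw [uIcc_of_le ht]; exact fun z hz => le_trans hT₂pos.le hz.1)).intervalIntegrable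
  set B : ℝ := M * (T₂^(-δ') / δ') with hBdef
  have hM0 : 0 ≤ M := add_nonneg hM₁0 hM₂0
  have hB0 : 0 ≤ B := by positivity
  have hineq : ∀ t, T₂ ≤ t → |c| * (Real.log t - Real.log T₂) - (|f T₂| + B) ≤ |f t| := by
    intro t ht
    have htpos : 0 < t := lt_of_lt_of_le hT₂pos ht
    have h0uIcc : (0:ℝ) ∉ uIcc T₂ t := by
      rw [uIcc_of_le ht]
      intro hx
      exact absurd hx.1 (not_le.mpr hT₂pos)
    have hsubset : uIcc T₂ t ⊆ Ici 0 := by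
      rw [uIcc_of_le ht]
      exact fun z hz => le_trans hT₂pos.le hz.1
    have hint1 : IntervalIntegrable (fun s => c * (1/s)) volume T₂ t := by
      apply ContinuousOn.intervalIntegrable
      apply continuousOn_const.mul
      apply continuousOn_const.div continuousOn_id
      intro z hz
      rw [uIcc_of_le ht] at hz
      exact ne_of_gt (lt_of_lt_of_le hT₂pos hz.1)
    have hinth : IntervalIntegrable (fun s => ((φ (u s)) * (starRingEnd ℂ) β).im) volume T₂ t :=
      (hgc.mono hsubset).intervalIntegrable
    have hinte : IntervalIntegrable (fun s => ((φ (u s)) * (starRingEnd ℂ) β).im - c * (1/s)) volume T₂ t :=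
      hinth.sub hint1
    have hsplit : (∫ s in T₂..t, ((φ (u s)) * (starRingEnd ℂ) β).im)
        = (∫ s in T₂..t, c * (1/s))
          + ∫ s in T₂..t, (((φ (u s)) * (starRingEnd ℂ) β).im - c * (1/s)) := by
      rw [← intervalIntegral.integral_add hint1 hinte]
      apply intervalIntegral.integral_congr
      intro z _
      ring
    have hval1 : (∫ s in T₂..t, c * (1/s)) = c * (Real.log t - Real.log T₂) := by
      rw [intervalIntegral.integral_const_mul, integral_one_div h0uIcc,
        Real.log_div (ne_of_gt htpos) (ne_of_gt hT₂pos)]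
    have hrne : -(1+δ') ≠ (-1 : ℝ) := by
      intro h
      rw [neg_inj] at h
      linarith
    have hgint : IntervalIntegrable (fun s : ℝ => M * s^(-(1+δ'))) volume T₂ t := by
      apply ContinuousOn.intervalIntegrable
      apply continuousOn_const.mul
      apply continuousOn_of_forall_continuousAt
      intro z hz
      rw [uIcc_of_le ht] at hz
      exact Real.continuousAt_rpow_const z _ (Or.inl (ne_of_gt (lt_of_lt_of_le hT₂pos hz.1)))
    have hEbound : |∫ s in T₂..t, (((φ (u s)) * (starRingEnd ℂ) β).im - c * (1/s))| ≤ B := by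
      have h1 : ‖∫ s in T₂..t, (((φ (u s)) * (starRingEnd ℂ) β).im - c * (1/s))‖
          ≤ |∫ s in T₂..t, M * s^(-(1+δ'))| := by
        apply intervalIntegral.norm_integral_le_abs_of_norm_le _ hgint
        apply (ae_restrict_iff' measurableSet_uIoc).2
        apply Filter.Eventually.of_forall
        intro z hz
        rw [uIoc_of_le ht] at hz
        have hzT₂ : T₂ ≤ z := hz.1.le
        have := hE z hzT₂
        rw [Real.norm_eq_abs, mul_one_div]
        exact this
      have hval2 : (∫ s in T₂..t, M * s^(-(1+δ')))
          = M * ((t ^ (-(1+δ') + 1) - T₂ ^ (-(1+δ') + 1)) / (-(1+δ') + 1)) := by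
        rw [intervalIntegral.integral_const_mul, integral_rpow (Or.inr ⟨hrne, h0uIcc⟩)]
      have hexp : -(1+δ') + 1 = -δ' := by ring
      rw [hval2, hexp] at h1
      rw [Real.norm_eq_abs] at h1
      refine le_trans h1 ?_
      have htle : t ^ (-δ') ≤ T₂ ^ (-δ') := by
        rw [Real.rpow_neg htpos.le, Real.rpow_neg hT₂pos.le]
        exact inv_anti₀ (Real.rpow_pos_of_pos hT₂pos _)
          (Real.rpow_le_rpow hT₂pos.le ht hδ0.le)
      have htnn : 0 ≤ t ^ (-δ') := Real.rpow_nonneg htpos.le _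
      have heq4 : (t ^ (-δ') - T₂ ^ (-δ')) / (-δ') = (T₂ ^ (-δ') - t ^ (-δ')) / δ' := by
        rw [div_neg, ← neg_div, neg_sub]
      have habs3 : |M * ((t ^ (-δ') - T₂ ^ (-δ')) / (-δ'))| = M * ((T₂ ^ (-δ') - t ^ (-δ')) / δ') := by
        rw [heq4, abs_mul, _root_.abs_of_nonneg hM0,
          _root_.abs_of_nonneg (div_nonneg (sub_nonneg.mpr htle) hδ0.le)]
      rw [habs3, hBdef]
      apply mul_le_mul_of_nonneg_left _ hM0
      have : T₂ ^ (-δ') - t ^ (-δ') ≤ T₂ ^ (-δ') := by linarith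
      gcongr
    -- combine
    have hEq : f t = f T₂ + c * (Real.log t - Real.log T₂)
        + (∫ s in T₂..t, (((φ (u s)) * (starRingEnd ℂ) β).im - c * (1/s))) := by
      have := hfFTC t ht
      rw [hsplit, hval1] at this
      linarith
    set E := ∫ s in T₂..t, (((φ (u s)) * (starRingEnd ℂ) β).im - c * (1/s)) with hEdef
    have hΔ : 0 ≤ Real.log t - Real.log T₂ :=
      sub_nonneg.mpr (Real.log_le_log hT₂pos ht)
    have h5 : |c| * (Real.log t - Real.log T₂) = |c * (Real.log t - Real.log T₂)| := by
      rw [abs_mul, _root_.abs_of_nonneg hΔ]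
    have h6 : |c * (Real.log t - Real.log T₂)| = |f t - (f T₂ + E)| := by
      congr 1
      rw [hEq]
      ring
    have h7 : |f t - (f T₂ + E)| ≤ |f t| + (|f T₂| + |E|) := by
      refine le_trans (abs_sub _ _) ?_
      exact add_le_add le_rfl (abs_add_le _ _)
    rw [h5, h6] at *
    linarith [h7, hEbound]
  -- conclusion
  have htend : Filter.Tendsto (fun t => |c| * (Real.log t - Real.log T₂) - (|f T₂| + B)) atTop atTop := by
    apply Filter.tendsto_atTop_add_const_right
    apply Filter.Tendsto.const_mul_atTop (abs_pos.mpr hc)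
    simpa [sub_eq_add_neg] using
      Filter.tendsto_atTop_add_const_right atTop (-Real.log T₂) Real.tendsto_log_atTop
  exact tendsto_atTop_mono' atTop ((eventually_ge_atTop T₂).mono (fun t ht => hineq t ht)) htend

theorem stmt17 (Φ : ℝ → ℂ → ℂ) (φ : ℂ → ℂ) (β γ : ℂ) (ε : ℝ)
    (hsg : IsContinuousSemigroupOnHalfPlane Φ φ)
    (hdw : HasDWPointInfty Φ)
    (hβ : β ≠ 0) (hε : 0 < ε)
    (hrep : Tendsto (fun w : ℂ => w ^ ((1 + ε : ℝ) : ℂ) * (φ w - β - γ / (w + 1)))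
      (atInftyWithin rightHalfPlane) (𝓝 0))
    (hγβ : (γ / β ^ 2).im ≠ 0) :
    ∀ w ∈ rightHalfPlane,
      Tendsto (fun t : ℝ => |(Φ t w * (starRingEnd ℂ) β).im|) atTop atTop := by
  intro w hw
  obtain ⟨R, hR1, hbound⟩ := phi_bounds φ β γ ε hε hrep
  have hmem : ∀ t, 0 ≤ t → Φ t w ∈ rightHalfPlane := fun t ht => hsg.mapsTo t ht hw
  have hd : ∀ t, 0 ≤ t → HasDerivWithinAt (fun s => Φ s w) (φ (Φ t w)) (Ici 0) t :=
    fun t ht => hsg.ode w hw t ht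
  have hucont : ContinuousOn (fun t => Φ t w) (Ici 0) :=
    fun t ht => (hd t ht).continuousWithinAt
  have hφucont : ContinuousOn (fun s => φ (Φ s w)) (Ici 0) :=
    hsg.gen_holomorphic.continuousOn.comp hucont (fun t ht => hmem t ht)
  exact core (fun t => Φ t w) φ β γ ε hβ hε hmem hucont hφucont hd (hdw w hw) R hR1 hbound hγβ
end
end
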